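/- arXiv:math/9704213 — 5 statements merged into one kernel-verified Lean document; each statement's English description precedes it below -/
import Mathlib

section
/- Let φ : [0,1] → [0,1] be an increasing concave function with φ(0) = 0, φ(1) = 1, and suppose sup_{0<t≤1} φ(t)·t^{-1/n} = ∞ for every positive integer n. Then for every q ∈ [1,∞) there exists a quasi-concave function ψ : [0,1] → [0,1] with ψ ≤ φ such that sup_{0<t≤1} (1/ψ(t))·Σ_{j=1}^∞ j^{(1/q)-1}·ψ(t^j/j!) = ∞. -/
set_option maxHeartbeats 2000000 in
theorem theorem14_iii_of_not (φ : ℝ → ℝ)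
    (hmono : MonotoneOn φ (Set.Icc (0:ℝ) 1))
    (hconc : ConcaveOn ℝ (Set.Icc (0:ℝ) 1) φ)
    (h0 : φ 0 = 0) (h1 : φ 1 = 1)
    (hrange : ∀ t ∈ Set.Icc (0:ℝ) 1, φ t ∈ Set.Icc (0:ℝ) 1)
    (hsup : ∀ n : ℕ, 0 < n → ∀ M : ℝ, ∃ t ∈ Set.Ioc (0:ℝ) 1,
      M < φ t * t ^ (-(1 : ℝ) / (n : ℝ)))
    (q : ℝ) (hq : 1 ≤ q) :
    ∃ ψ : ℝ → ℝ, ψ 0 = 0 ∧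
      (∀ t ∈ Set.Icc (0:ℝ) 1, 0 ≤ ψ t ∧ ψ t ≤ φ t) ∧
      MonotoneOn ψ (Set.Ioc (0:ℝ) 1) ∧
      MonotoneOn (fun t => t / ψ t) (Set.Ioc (0:ℝ) 1) ∧
      (∀ M : ℝ, ∃ t ∈ Set.Ioc (0:ℝ) 1, ∃ N : ℕ,
        M < (1 / ψ t) * ∑ j ∈ Finset.Icc 1 N,
              (j : ℝ) ^ ((1 / q) - 1) * ψ (t ^ j / (Nat.factorial j : ℝ))) := by
  classical
  have hq0 : 0 < q := lt_of_lt_of_le one_pos hq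
  have h0m : (0:ℝ) ∈ Set.Icc (0:ℝ) 1 := by norm_num
  have h1m : (1:ℝ) ∈ Set.Icc (0:ℝ) 1 := by norm_num
  -- φ x ≥ x on [0,1]
  have hphi_ge : ∀ x ∈ Set.Icc (0:ℝ) 1, x ≤ φ x := by
    intro x hx
    have h := hconc.2 h0m h1m (show (0:ℝ) ≤ 1 - x by linarith [hx.2]) hx.1
      (show (1 - x) + x = 1 by ring)
    simpa [h0, h1, smul_eq_mul] using h
  -- slope inequality from concavity
  have hslope : ∀ v ∈ Set.Icc (0:ℝ) 1, ∀ x, 0 ≤ x → x ≤ v → 0 < v →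
      φ v * (x / v) ≤ φ x := by
    intro v hv x hx hxv hv0
    have hb0 : 0 ≤ x / v := div_nonneg hx hv0.le
    have hb1 : x / v ≤ 1 := (div_le_one hv0).2 hxv
    have h := hconc.2 h0m hv (show (0:ℝ) ≤ 1 - x / v by linarith) hb0
      (show (1 - x / v) + x / v = 1 by ring)
    have hxx : (1 - x / v) • (0:ℝ) + (x / v) • v = x := by
      simp only [smul_eq_mul]
      field_simp
      ring
    rw [hxx] at h
    have h' : (1 - x / v) * φ 0 + (x / v) * φ v ≤ φ x := h
    rw [h0] at h'
    nlinarith [h']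
  -- divergence of the coefficient sums : choice of J
  have hJex : ∀ m : ℕ, ∃ N : ℕ, 1 ≤ N ∧ (m:ℝ) < ∑ j ∈ Finset.Icc 1 N, (j:ℝ) ^ ((1/q) - 1) := by
    intro m
    obtain ⟨N, hN⟩ :=
      (Real.tendsto_sum_range_one_div_nat_succ_atTop.eventually_gt_atTop (m:ℝ)).exists
    have hN1 : 1 ≤ N := by
      rcases N with _ | n
      · simp at hN
        exact absurd hN (not_lt.2 (Nat.cast_nonneg m))
      · omega
    have heq : ∑ j ∈ Finset.Icc 1 N, (1:ℝ) / (j:ℝ) = ∑ i ∈ Finset.range N, 1 / ((i:ℝ) + 1) := by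
      rw [← Finset.Ico_succ_right_eq_Icc, Finset.sum_Ico_eq_sum_range]
      refine Finset.sum_congr (by simp) (fun i _ => ?_)
      push_cast
      rw [add_comm]
    have hle : ∑ j ∈ Finset.Icc 1 N, (1:ℝ) / (j:ℝ) ≤
        ∑ j ∈ Finset.Icc 1 N, (j:ℝ) ^ ((1/q) - 1) := by
      apply Finset.sum_le_sum
      intro j hj
      have hj1 : (1:ℝ) ≤ (j:ℝ) := by
        exact_mod_cast (Finset.mem_Icc.1 hj).1
      have h1q : 0 ≤ 1 / q := by positivity
      calc (1:ℝ) / (j:ℝ) = (j:ℝ) ^ (-1:ℝ) := by rw [Real.rpow_neg_one, one_div]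
        _ ≤ (j:ℝ) ^ ((1/q) - 1) := Real.rpow_le_rpow_of_exponent_le hj1 (by linarith)
    refine ⟨N, hN1, ?_⟩
    calc (m:ℝ) < ∑ i ∈ Finset.range N, 1 / ((i:ℝ) + 1) := hN
      _ = ∑ j ∈ Finset.Icc 1 N, (1:ℝ) / (j:ℝ) := heq.symm
      _ ≤ _ := hle
  choose Jf hJf1 hJf2 using hJex
  -- key step : choosing the next scale
  have key : ∀ (m : ℕ) (C uprev : ℝ), 1 ≤ C → 0 < uprev →
      ∃ v : ℝ, 0 < v ∧ v ≤ 1 ∧ v < uprev ∧ (Nat.factorial (Jf m) : ℝ) * v ≤ 1 ∧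
        C * ((Nat.factorial (Jf m) : ℝ) * v) ^ (1 / (Jf m : ℝ)) ≤ φ v := by
    intro m C uprev hC hup
    have hJ1 : 1 ≤ Jf m := hJf1 m
    have hJR : (1:ℝ) ≤ (Jf m : ℝ) := by exact_mod_cast hJ1
    have hJne : (Jf m : ℝ) ≠ 0 := by linarith
    have hfac1 : (1:ℝ) ≤ (Nat.factorial (Jf m) : ℝ) := by
      exact_mod_cast (Nat.factorial_pos (Jf m))
    set M := C * (Nat.factorial (Jf m) : ℝ) + 1 / uprev with hMdef
    have hCJ : (1:ℝ) ≤ C * (Nat.factorial (Jf m) : ℝ) := by nlinarith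
    have hupinv : 0 < 1 / uprev := by positivity
    have hM1 : (1:ℝ) ≤ M := by rw [hMdef]; linarith
    have hM0 : (0:ℝ) < M := by linarith
    have h2J : 0 < 2 * Jf m := by omega
    obtain ⟨v, hvIoc, hvgt⟩ := hsup (2 * Jf m) h2J M
    have hv0 : 0 < v := hvIoc.1
    have hv1 : v ≤ 1 := hvIoc.2
    set e := (1:ℝ) / (2 * (Jf m : ℝ)) with hedef
    have he0 : 0 < e := by rw [hedef]; positivity
    have hvgt' : M * v ^ e < φ v := by
      have hcast : -(1:ℝ) / ((2 * Jf m : ℕ) : ℝ) = -e := by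
        rw [hedef]; push_cast; ring
      rw [hcast, Real.rpow_neg hv0.le] at hvgt
      have hve : 0 < v ^ e := Real.rpow_pos_of_pos hv0 _
      have h' := mul_lt_mul_of_pos_right hvgt hve
      calc M * v ^ e < φ v * (v ^ e)⁻¹ * v ^ e := h'
        _ = φ v := by field_simp
    have hφv1 : φ v ≤ 1 := (hrange v ⟨hv0.le, hv1⟩).2
    have hve : 0 < v ^ e := Real.rpow_pos_of_pos hv0 _
    have hveM : v ^ e < 1 / M := by
      rw [lt_div_iff₀ hM0]
      nlinarith
    have hve1 : v ^ e ≤ 1 := Real.rpow_le_one hv0.le hv1 he0.le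
    have hvle : v ≤ v ^ e := by
      have he1 : e ≤ 1 := by
        rw [hedef, div_le_one (by linarith)]; linarith
      have := Real.rpow_le_rpow_of_exponent_ge hv0 hv1 he1
      rwa [Real.rpow_one] at this
    have hvM : v < 1 / M := lt_of_le_of_lt hvle hveM
    refine ⟨v, hv0, hv1, ?_, ?_, ?_⟩
    · -- v < uprev
      have h1 : 1 / M < uprev := by
        rw [div_lt_iff₀ hM0, hMdef]
        have : uprev * (1 / uprev) = 1 := by field_simp
        nlinarith [mul_pos hup (lt_of_lt_of_le one_pos hCJ)]
      linarith
    · -- Nat.factorial (Jf m) * v ≤ 1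
      have hMJ : (Nat.factorial (Jf m) : ℝ) ≤ M := by rw [hMdef]; nlinarith
      have h2 : 1 / M ≤ 1 / (Nat.factorial (Jf m) : ℝ) :=
        one_div_le_one_div_of_le (by linarith) hMJ
      have h3 : v ≤ 1 / (Nat.factorial (Jf m) : ℝ) := by linarith
      rw [mul_comm]
      exact (le_div_iff₀ (by linarith)).1 h3
    · -- main inequality
      have hsplit : ((Nat.factorial (Jf m) : ℝ) * v) ^ ((1:ℝ) / (Jf m : ℝ)) =
          (Nat.factorial (Jf m) : ℝ) ^ ((1:ℝ) / (Jf m : ℝ)) * v ^ ((1:ℝ) / (Jf m : ℝ)) :=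
        Real.mul_rpow (by linarith) hv0.le
      have hfacpow : (Nat.factorial (Jf m) : ℝ) ^ ((1:ℝ) / (Jf m : ℝ)) ≤ (Nat.factorial (Jf m) : ℝ) := by
        calc (Nat.factorial (Jf m) : ℝ) ^ ((1:ℝ) / (Jf m : ℝ)) ≤ (Nat.factorial (Jf m) : ℝ) ^ (1:ℝ) :=
              Real.rpow_le_rpow_of_exponent_le hfac1
                (by rw [div_le_one (by linarith)]; linarith)
          _ = (Nat.factorial (Jf m) : ℝ) := Real.rpow_one _
      have hvsplit : v ^ ((1:ℝ) / (Jf m : ℝ)) = v ^ e * v ^ e := by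
        rw [← Real.rpow_add hv0]
        congr 1
        rw [hedef]
        field_simp
        ring
      have hfp0 : 0 ≤ (Nat.factorial (Jf m) : ℝ) ^ ((1:ℝ) / (Jf m : ℝ)) :=
        Real.rpow_nonneg (by linarith) _
      have hBB : v ^ e * v ^ e ≤ v ^ e := mul_le_of_le_one_right hve.le hve1
      have hstep1 : ((Nat.factorial (Jf m) : ℝ)) ^ ((1:ℝ) / (Jf m : ℝ)) * (v ^ e * v ^ e) ≤
          (Nat.factorial (Jf m) : ℝ) * v ^ e :=
        mul_le_mul hfacpow hBB (mul_pos hve hve).le (by linarith)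
      calc C * ((Nat.factorial (Jf m) : ℝ) * v) ^ (1 / (Jf m : ℝ))
          = C * ((Nat.factorial (Jf m) : ℝ) ^ ((1:ℝ) / (Jf m : ℝ)) * (v ^ e * v ^ e)) := by
            rw [hsplit, hvsplit]
        _ ≤ C * ((Nat.factorial (Jf m) : ℝ) * v ^ e) := mul_le_mul_of_nonneg_left hstep1 (by linarith)
        _ = (C * (Nat.factorial (Jf m) : ℝ)) * v ^ e := by ring
        _ ≤ M * v ^ e := mul_le_mul_of_nonneg_right (by rw [hMdef]; linarith) hve.le
        _ ≤ φ v := hvgt'.le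
  -- totalized version for recursion
  have key' : ∀ (m : ℕ) (C uprev : ℝ), ∃ v : ℝ, (1 ≤ C → 0 < uprev →
      0 < v ∧ v ≤ 1 ∧ v < uprev ∧ (Nat.factorial (Jf m) : ℝ) * v ≤ 1 ∧
        C * ((Nat.factorial (Jf m) : ℝ) * v) ^ (1 / (Jf m : ℝ)) ≤ φ v) := by
    intro m C uprev
    by_cases hC : 1 ≤ C
    · by_cases hup : 0 < uprev
      · obtain ⟨v, hv⟩ := key m C uprev hC hup
        exact ⟨v, fun _ _ => hv⟩
      · exact ⟨0, fun _ h => absurd h hup⟩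
    · exact ⟨0, fun h _ => absurd h hC⟩
  choose F hF using key'
  -- the recursive sequences
  obtain ⟨u, Cf, hu0eq, hC0eq, huseq, hCseq⟩ :
      ∃ (u : ℕ → ℝ) (Cf : ℕ → ℝ), u 0 = F 0 1 1 ∧ Cf 0 = 1 ∧
        (∀ k, u (k+1) = F (k+1) (max (Cf k) (φ (u k) / u k)) (u k)) ∧
        (∀ k, Cf (k+1) = max (Cf k) (φ (u k) / u k)) := by
    refine ⟨fun m => (Nat.rec ((F 0 1 1 : ℝ), (1:ℝ))
        (fun k p => (F (k+1) (max p.2 (φ p.1 / p.1)) p.1, max p.2 (φ p.1 / p.1))) m :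
          ℝ × ℝ).1,
      fun m => (Nat.rec ((F 0 1 1 : ℝ), (1:ℝ))
        (fun k p => (F (k+1) (max p.2 (φ p.1 / p.1)) p.1, max p.2 (φ p.1 / p.1))) m :
          ℝ × ℝ).2,
      rfl, rfl, fun k => rfl, fun k => rfl⟩
  have hInv : ∀ m, 1 ≤ Cf m ∧ 0 < u m ∧ u m ≤ 1 ∧ (Nat.factorial (Jf m) : ℝ) * u m ≤ 1 ∧
      Cf m * ((Nat.factorial (Jf m) : ℝ) * u m) ^ (1 / (Jf m : ℝ)) ≤ φ (u m) := by
    intro m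
    induction m with
    | zero =>
      rw [hu0eq, hC0eq]
      have h := hF 0 1 1 le_rfl one_pos
      exact ⟨le_rfl, h.1, h.2.1, h.2.2.2.1, h.2.2.2.2⟩
    | succ k ih =>
      obtain ⟨hC1, hu0, hu1, -, -⟩ := ih
      have hC1' : 1 ≤ max (Cf k) (φ (u k) / u k) := le_max_of_le_left hC1
      have h := hF (k+1) (max (Cf k) (φ (u k) / u k)) (u k) hC1' hu0
      rw [huseq k, hCseq k]
      exact ⟨hC1', h.1, h.2.1, h.2.2.2.1, h.2.2.2.2⟩
  have hu_dec : ∀ k, u (k+1) < u k := by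
    intro k
    obtain ⟨hC1, hu0, -, -, -⟩ := hInv k
    have h := hF (k+1) (max (Cf k) (φ (u k) / u k)) (u k) (le_max_of_le_left hC1) hu0
    rw [huseq k]
    exact h.2.2.1
  have huAnti : Antitone u := antitone_nat_of_succ_le (fun n => (hu_dec n).le)
  have hCmono : Monotone Cf := monotone_nat_of_le_succ (fun n => by
    rw [hCseq n]; exact le_max_left _ _)
  have hC_ge : ∀ i m, i < m → φ (u i) / u i ≤ Cf m := by
    intro i m him
    calc φ (u i) / u i ≤ Cf (i+1) := by rw [hCseq i]; exact le_max_right _ _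
      _ ≤ Cf m := hCmono him
  have hIccu : ∀ m, u m ∈ Set.Icc (0:ℝ) 1 := fun m => ⟨(hInv m).2.1.le, (hInv m).2.2.1⟩
  have hφupos : ∀ m, 0 < φ (u m) := fun m =>
    lt_of_lt_of_le (hInv m).2.1 (hphi_ge _ (hIccu m))
  have hφule1 : ∀ m, φ (u m) ≤ 1 := fun m => (hrange _ (hIccu m)).2
  -- boundedness of the family defining ψ
  have hbdd : ∀ x : ℝ, BddAbove (Set.range fun m => φ (u m) * min 1 (x / u m)) := by
    intro x
    refine ⟨1, ?_⟩
    rintro y ⟨m, rfl⟩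
    calc φ (u m) * min 1 (x / u m) ≤ φ (u m) * 1 :=
          mul_le_mul_of_nonneg_left (min_le_left _ _) (hφupos m).le
      _ ≤ 1 := by rw [mul_one]; exact hφule1 m
  -- ψ(0) = 0
  have hψ0 : (⨆ m, φ (u m) * min 1 ((0:ℝ) / u m)) = 0 := by
    have h : (fun m : ℕ => φ (u m) * min 1 ((0:ℝ) / u m)) = fun _ => (0:ℝ) := by
      funext m
      rw [zero_div]
      norm_num
    rw [show (⨆ m, φ (u m) * min 1 ((0:ℝ) / u m)) = ⨆ _ : ℕ, (0:ℝ) from by rw [h]]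
    exact ciSup_const
  -- positivity of ψ
  have hψpos : ∀ x : ℝ, 0 < x → 0 < ⨆ m, φ (u m) * min 1 (x / u m) := by
    intro x hx
    calc (0:ℝ) < φ (u 0) * min 1 (x / u 0) :=
          mul_pos (hφupos 0) (lt_min one_pos (div_pos hx (hInv 0).2.1))
      _ ≤ _ := le_ciSup (hbdd x) 0
  -- bounds for ψ
  have hbounds : ∀ x ∈ Set.Icc (0:ℝ) 1,
      0 ≤ (⨆ m, φ (u m) * min 1 (x / u m)) ∧ (⨆ m, φ (u m) * min 1 (x / u m)) ≤ φ x := by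
    intro x hx
    constructor
    · calc (0:ℝ) ≤ φ (u 0) * min 1 (x / u 0) :=
            mul_nonneg (hφupos 0).le (le_min zero_le_one (div_nonneg hx.1 (hInv 0).2.1.le))
        _ ≤ _ := le_ciSup (hbdd x) 0
    · apply ciSup_le
      intro m
      rcases le_or_gt (u m) x with h | h
      · calc φ (u m) * min 1 (x / u m) ≤ φ (u m) * 1 :=
              mul_le_mul_of_nonneg_left (min_le_left _ _) (hφupos m).le
          _ = φ (u m) := mul_one _
          _ ≤ φ x := hmono (hIccu m) hx h
      · calc φ (u m) * min 1 (x / u m) ≤ φ (u m) * (x / u m) :=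
              mul_le_mul_of_nonneg_left (min_le_right _ _) (hφupos m).le
          _ ≤ φ x := hslope (u m) (hIccu m) x hx.1 h.le (hInv m).2.1
  -- monotonicity of ψ
  have hψmono : MonotoneOn (fun x => ⨆ m, φ (u m) * min 1 (x / u m))
      (Set.Ioc (0:ℝ) 1) := by
    intro x hx y hy hxy
    simp only
    apply ciSup_le
    intro m
    have h : φ (u m) * min 1 (x / u m) ≤ φ (u m) * min 1 (y / u m) :=
      mul_le_mul_of_nonneg_left
        (min_le_min le_rfl ((div_le_div_iff_of_pos_right (hInv m).2.1).2 hxy)) (hφupos m).le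
    exact h.trans (le_ciSup (hbdd y) m)
  -- monotonicity of t / ψ t
  have hratio : MonotoneOn (fun x => x / ⨆ m, φ (u m) * min 1 (x / u m))
      (Set.Ioc (0:ℝ) 1) := by
    intro x hx y hy hxy
    simp only
    have hx0 : 0 < x := hx.1
    have hy0 : 0 < y := hy.1
    have hkey : (⨆ m, φ (u m) * min 1 (y / u m)) ≤
        (y / x) * ⨆ m, φ (u m) * min 1 (x / u m) := by
      apply ciSup_le
      intro m
      have hterm : min 1 (y / u m) ≤ (y / x) * min 1 (x / u m) := by
        rcases le_or_gt (u m) x with h | h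
        · have h1 : min 1 (x / u m) = 1 := min_eq_left ((one_le_div (hInv m).2.1).2 h)
          rw [h1, mul_one]
          exact le_trans (min_le_left _ _) ((one_le_div hx0).2 hxy)
        · have h1 : min 1 (x / u m) = x / u m :=
            min_eq_right ((div_le_one (hInv m).2.1).2 h.le)
          rw [h1]
          have h2 : (y / x) * (x / u m) = y / u m := by
            field_simp
          rw [h2]
          exact min_le_right _ _
      calc φ (u m) * min 1 (y / u m) ≤ φ (u m) * ((y / x) * min 1 (x / u m)) :=
            mul_le_mul_of_nonneg_left hterm (hφupos m).le
        _ = (y / x) * (φ (u m) * min 1 (x / u m)) := by ring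
        _ ≤ (y / x) * ⨆ m, φ (u m) * min 1 (x / u m) :=
            mul_le_mul_of_nonneg_left (le_ciSup (hbdd x) m) (div_nonneg hy0.le hx0.le)
    rw [div_le_div_iff₀ (hψpos x hx0) (hψpos y hy0)]
    calc x * ⨆ m, φ (u m) * min 1 (y / u m)
        ≤ x * ((y / x) * ⨆ m, φ (u m) * min 1 (x / u m)) :=
          mul_le_mul_of_nonneg_left hkey hx0.le
      _ = y * ⨆ m, φ (u m) * min 1 (x / u m) := by
          field_simp
  -- the unboundedness property
  have hfinal : ∀ M : ℝ, ∃ t ∈ Set.Ioc (0:ℝ) 1, ∃ N : ℕ,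
      M < (1 / ⨆ m, φ (u m) * min 1 (t / u m)) * ∑ j ∈ Finset.Icc 1 N,
            (j : ℝ) ^ ((1 / q) - 1) *
              ⨆ m, φ (u m) * min 1 ((t ^ j / (Nat.factorial j : ℝ)) / u m) := by
    intro M
    obtain ⟨m, hm⟩ := exists_nat_gt M
    obtain ⟨hC1, hum0, hum1, hfu, hmain⟩ := hInv m
    have hJ1 : 1 ≤ Jf m := hJf1 m
    have hJne : (Jf m : ℝ) ≠ 0 := by
      have : (1:ℝ) ≤ (Jf m : ℝ) := by exact_mod_cast hJ1
      linarith
    have hfacpos : (0:ℝ) < (Nat.factorial (Jf m) : ℝ) := by exact_mod_cast Nat.factorial_pos (Jf m)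
    have hx0 : 0 < (Nat.factorial (Jf m) : ℝ) * u m := mul_pos hfacpos hum0
    set t : ℝ := ((Nat.factorial (Jf m) : ℝ) * u m) ^ ((1:ℝ) / (Jf m : ℝ)) with htdef
    have ht0 : 0 < t := Real.rpow_pos_of_pos hx0 _
    have ht1 : t ≤ 1 := Real.rpow_le_one hx0.le hfu (by positivity)
    have htJ : t ^ (Jf m) = (Nat.factorial (Jf m) : ℝ) * u m := by
      rw [htdef, ← Real.rpow_natCast (((Nat.factorial (Jf m) : ℝ) * u m) ^ ((1:ℝ) / (Jf m : ℝ))) (Jf m),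
        ← Real.rpow_mul hx0.le, one_div_mul_cancel hJne, Real.rpow_one]
    have humt : u m = t ^ (Jf m) / (Nat.factorial (Jf m) : ℝ) := by
      rw [htJ]
      field_simp
    refine ⟨t, ⟨ht0, ht1⟩, Jf m, ?_⟩
    have harg : ∀ j ∈ Finset.Icc 1 (Jf m), u m ≤ t ^ j / (Nat.factorial j : ℝ) := by
      intro j hj
      obtain ⟨hj1, hjJ⟩ := Finset.mem_Icc.1 hj
      have h1 : t ^ (Jf m) ≤ t ^ j := pow_le_pow_of_le_one ht0.le ht1 hjJ
      have h2 : (Nat.factorial j : ℝ) ≤ (Nat.factorial (Jf m) : ℝ) := by exact_mod_cast Nat.factorial_le hjJ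
      have h3 : (0:ℝ) < (Nat.factorial j : ℝ) := by exact_mod_cast Nat.factorial_pos j
      rw [humt]
      exact div_le_div₀ (pow_nonneg ht0.le j) h1 h3 h2
    have hflat : ∀ j ∈ Finset.Icc 1 (Jf m),
        φ (u m) ≤ ⨆ m', φ (u m') * min 1 ((t ^ j / (Nat.factorial j : ℝ)) / u m') := by
      intro j hj
      have h1 : min 1 ((t ^ j / (Nat.factorial j : ℝ)) / u m) = 1 :=
        min_eq_left ((one_le_div hum0).2 (harg j hj))
      calc φ (u m) = φ (u m) * min 1 ((t ^ j / (Nat.factorial j : ℝ)) / u m) := by rw [h1, mul_one]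
        _ ≤ _ := le_ciSup (hbdd _) m
    have hψt_le : (⨆ m', φ (u m') * min 1 (t / u m')) ≤ φ (u m) := by
      apply ciSup_le
      intro i
      rcases lt_or_ge i m with h | h
      · calc φ (u i) * min 1 (t / u i) ≤ φ (u i) * (t / u i) :=
              mul_le_mul_of_nonneg_left (min_le_right _ _) (hφupos i).le
          _ = (φ (u i) / u i) * t := by ring
          _ ≤ Cf m * t := mul_le_mul_of_nonneg_right (hC_ge i m h) ht0.le
          _ ≤ φ (u m) := by rw [htdef]; exact hmain
      · calc φ (u i) * min 1 (t / u i) ≤ φ (u i) * 1 :=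
              mul_le_mul_of_nonneg_left (min_le_left _ _) (hφupos i).le
          _ = φ (u i) := mul_one _
          _ ≤ φ (u m) := hmono (hIccu i) (hIccu m) (huAnti h)
    have hψtpos : 0 < ⨆ m', φ (u m') * min 1 (t / u m') := hψpos t ht0
    have hcnn : ∀ j ∈ Finset.Icc 1 (Jf m), (0:ℝ) ≤ (j : ℝ) ^ ((1 / q) - 1) := by
      intro j hj
      exact Real.rpow_nonneg (Nat.cast_nonneg j) _
    have hsum : (∑ j ∈ Finset.Icc 1 (Jf m), (j:ℝ) ^ ((1/q) - 1)) * φ (u m) ≤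
        ∑ j ∈ Finset.Icc 1 (Jf m), (j : ℝ) ^ ((1 / q) - 1) *
          ⨆ m', φ (u m') * min 1 ((t ^ j / (Nat.factorial j : ℝ)) / u m') := by
      rw [Finset.sum_mul]
      apply Finset.sum_le_sum
      intro j hj
      exact mul_le_mul_of_nonneg_left (hflat j hj) (hcnn j hj)
    have hS_nn : (0:ℝ) ≤ ∑ j ∈ Finset.Icc 1 (Jf m), (j : ℝ) ^ ((1 / q) - 1) *
        ⨆ m', φ (u m') * min 1 ((t ^ j / (Nat.factorial j : ℝ)) / u m') := by
      refine le_trans ?_ hsum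
      exact mul_nonneg (Finset.sum_nonneg hcnn) (hφupos m).le
    have hrecip : 1 / φ (u m) ≤ 1 / ⨆ m', φ (u m') * min 1 (t / u m') :=
      one_div_le_one_div_of_le hψtpos hψt_le
    calc M < (m:ℝ) := hm
      _ < ∑ j ∈ Finset.Icc 1 (Jf m), (j:ℝ) ^ ((1/q) - 1) := hJf2 m
      _ = (1 / φ (u m)) * ((∑ j ∈ Finset.Icc 1 (Jf m), (j:ℝ) ^ ((1/q) - 1)) * φ (u m)) := by
          have hgen : ∀ S : ℝ, S = (1 / φ (u m)) * (S * φ (u m)) := by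
            intro S
            rw [one_div, mul_comm S (φ (u m)), ← mul_assoc,
              inv_mul_cancel₀ (hφupos m).ne', one_mul]
          exact hgen _
      _ ≤ (1 / φ (u m)) * ∑ j ∈ Finset.Icc 1 (Jf m), (j : ℝ) ^ ((1 / q) - 1) *
            ⨆ m', φ (u m') * min 1 ((t ^ j / (Nat.factorial j : ℝ)) / u m') :=
          mul_le_mul_of_nonneg_left hsum (one_div_nonneg.2 (hφupos m).le)
      _ ≤ (1 / ⨆ m', φ (u m') * min 1 (t / u m')) *
            ∑ j ∈ Finset.Icc 1 (Jf m), (j : ℝ) ^ ((1 / q) - 1) *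
              ⨆ m', φ (u m') * min 1 ((t ^ j / (Nat.factorial j : ℝ)) / u m') :=
          mul_le_mul_of_nonneg_right hrecip hS_nn
  exact ⟨fun x => ⨆ m, φ (u m) * min 1 (x / u m), hψ0, hbounds, hψmono, hratio, hfinal⟩
end

section
/- For p > 0 define φ_p(t) = (log(1 + 1/t)/log 2)^{-1/p} for t ∈ (0,1], φ_p(0) = 0. If 1 ≤ q < ∞ and 0 < p < q, then sup_{0<t≤1} (1/φ_p(t))·Σ_{j=1}^∞ j^{(1/q)-1}·φ_p(t^j/j!) < ∞. -/
/-- `φ_p(t) = (log(1 + 1/t)/log 2)^{-1/p}` for `t ∈ (0,1]`, `φ_p(0) = 0`. -/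
noncomputable def phi (p t : ℝ) : ℝ :=
  if t = 0 then 0 else (Real.log (1 + 1 / t) / Real.log 2) ^ (-(1 : ℝ) / p)


lemma aux1 (x : ℝ) (hx : 1 ≤ x) (n : ℕ) : (1+x)^(n+1) ≤ 2^n * (1 + x^(n+1)) := by
  induction n with
  | zero => simp
  | succ n ih =>
    have hX : (1:ℝ) ≤ x^(n+1) := one_le_pow₀ hx
    have h : (1+x)^(n+2) = (1+x)^(n+1) * (1+x) := by ring
    rw [h]
    have h1 : (1+x)^(n+1) * (1+x) ≤ (2^n * (1 + x^(n+1))) * (1+x) := by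
      apply mul_le_mul_of_nonneg_right ih (by linarith)
    refine h1.trans ?_
    have key : (1 + x^(n+1)) * (1+x) ≤ 2 * (1 + x^(n+2)) := by
      have hxx : x^(n+2) = x^(n+1) * x := by ring
      nlinarith [mul_nonneg (sub_nonneg.2 hx) (sub_nonneg.2 hX)]
    have h2 : (0:ℝ) ≤ 2^n := by positivity
    calc (2^n * (1 + x^(n+1))) * (1+x) = 2^n * ((1 + x^(n+1)) * (1+x)) := by ring
      _ ≤ 2^n * (2 * (1 + x^(n+2))) := mul_le_mul_of_nonneg_left key h2
      _ = 2^(n+1) * (1 + x^(n+2)) := by ring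

lemma aux2 (n : ℕ) : (2:ℝ)^n ≤ (Nat.factorial (n+1) : ℝ) := by
  induction n with
  | zero => simp [Nat.factorial]
  | succ n ih =>
    have : (Nat.factorial (n+2) : ℝ) = (n+2) * Nat.factorial (n+1) := by
      rw [Nat.factorial_succ]; push_cast; ring
    rw [this, pow_succ]
    have h2 : (2:ℝ) ≤ (n:ℝ) + 2 := le_add_of_nonneg_left (by positivity)
    nlinarith [pow_pos (by norm_num : (0:ℝ) < 2) n, (Nat.cast_pos (α := ℝ)).mpr (Nat.factorial_pos (n+1)), ih]

lemma aux3 (x : ℝ) (hx : 1 ≤ x) (n : ℕ) :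
    (1+x)^(n+1) ≤ (1 + (Nat.factorial (n+1) : ℝ) * x^(n+1))^2 := by
  have hX : (1:ℝ) ≤ x^(n+1) := one_le_pow₀ hx
  have hc : (1:ℝ) ≤ (Nat.factorial (n+1) : ℝ) := by exact_mod_cast Nat.one_le_iff_ne_zero.2 (Nat.factorial_ne_zero _)
  have h1 := aux1 x hx n
  have h2 : (2:ℝ)^n * (1 + x^(n+1)) ≤ (Nat.factorial (n+1) : ℝ) * (1 + x^(n+1)) := by
    apply mul_le_mul_of_nonneg_right (aux2 n) (by linarith)
  refine h1.trans (h2.trans ?_)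
  nlinarith [mul_le_mul hc hX (by linarith) (by linarith)]

lemma phi_key (p : ℝ) (hp : 0 < p) (t : ℝ) (ht0 : 0 < t) (ht1 : t ≤ 1) (j : ℕ) (hj : 1 ≤ j) :
    phi p (t^j / (Nat.factorial j : ℝ)) ≤
      2 ^ ((1:ℝ)/p) * (j:ℝ) ^ (-(1:ℝ)/p) * phi p t := by
  obtain ⟨n, rfl⟩ : ∃ n, j = n + 1 := ⟨j - 1, (Nat.succ_pred_eq_of_pos hj).symm⟩
  set x : ℝ := 1 / t with hxdef
  have hx : 1 ≤ x := one_le_one_div ht0 ht1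
  have hfac : (0:ℝ) < (Nat.factorial (n+1) : ℝ) := by positivity
  have hs : (0:ℝ) < t^(n+1) / (Nat.factorial (n+1) : ℝ) := by positivity
  have hinv : 1 / (t^(n+1) / (Nat.factorial (n+1) : ℝ)) = (Nat.factorial (n+1) : ℝ) * x^(n+1) := by
    rw [hxdef, div_pow, one_div_div]
    field_simp
    simp
  have hlog2 : (0:ℝ) < Real.log 2 := Real.log_pos (by norm_num)
  set L : ℝ := Real.log (1 + x) / Real.log 2 with hLdef
  have hL1 : 1 ≤ L := by
    rw [hLdef, le_div_iff₀ hlog2, one_mul]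
    exact Real.log_le_log (by norm_num) (by linarith)
  set c : ℝ := (Nat.factorial (n+1) : ℝ)
  set Ls : ℝ := Real.log (1 + c * x^(n+1)) / Real.log 2 with hLsdef
  have hcX : (1:ℝ) ≤ c * x^(n+1) := by
    have h1 : (1:ℝ) ≤ c := Nat.one_le_cast.mpr (Nat.one_le_iff_ne_zero.2 (Nat.factorial_ne_zero _))
    have h2 : (1:ℝ) ≤ x^(n+1) := one_le_pow₀ hx
    nlinarith
  have hchain : ((n:ℝ)+1)/2 * L ≤ Ls := by
    have hlog : ((n:ℝ)+1) * Real.log (1+x) ≤ 2 * Real.log (1 + c * x^(n+1)) := by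
      have := Real.log_le_log (by positivity) (aux3 x hx n)
      rw [Real.log_pow, Real.log_pow] at this
      push_cast at this
      convert this using 2 <;> ring_nf
    calc ((n:ℝ)+1)/2 * L = ((n:ℝ)+1) * Real.log (1+x) / (2 * Real.log 2) := by
          rw [hLdef]; ring
      _ ≤ 2 * Real.log (1 + c * x^(n+1)) / (2 * Real.log 2) :=
          (div_le_div_iff_of_pos_right (by positivity)).2 hlog
      _ = Ls := by rw [hLsdef, mul_div_mul_left _ _ (two_ne_zero)]
  have hL0 : (0:ℝ) < L := lt_of_lt_of_le one_pos hL1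
  have hexp : -(1:ℝ)/p ≤ 0 := by
    rw [neg_div]
    exact neg_nonpos.2 (le_of_lt (by positivity))
  have hphis : phi p (t^(n+1) / c) = Ls ^ (-(1:ℝ)/p) := by
    rw [phi, if_neg hs.ne', hinv, hLsdef]
  have hphit : phi p t = L ^ (-(1:ℝ)/p) := by
    rw [phi, if_neg ht0.ne', hLdef, hxdef]
  have hpos : (0:ℝ) < ((n:ℝ)+1)/2 * L := by positivity
  have hmono : Ls ^ (-(1:ℝ)/p) ≤ (((n:ℝ)+1)/2 * L) ^ (-(1:ℝ)/p) :=
    Real.rpow_le_rpow_of_nonpos hpos hchain hexp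
  have heq : (((n:ℝ)+1)/2 * L) ^ (-(1:ℝ)/p)
      = 2 ^ ((1:ℝ)/p) * ((n:ℝ)+1) ^ (-(1:ℝ)/p) * L ^ (-(1:ℝ)/p) := by
    rw [Real.mul_rpow (by positivity) hL0.le,
        Real.div_rpow (by positivity) (by norm_num : (0:ℝ) ≤ 2)]
    have h2 : (2:ℝ) ^ (-(1:ℝ)/p) = ((2:ℝ) ^ ((1:ℝ)/p))⁻¹ := by
      rw [neg_div, Real.rpow_neg (by norm_num : (0:ℝ) ≤ 2)]
    rw [h2, div_inv_eq_mul]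
    ring
  rw [hphis, hphit]
  have hcast : ((n+1 : ℕ) : ℝ) = (n:ℝ) + 1 := by push_cast; ring
  rw [hcast]
  calc Ls ^ (-(1:ℝ)/p) ≤ (((n:ℝ)+1)/2 * L) ^ (-(1:ℝ)/p) := hmono
    _ = 2 ^ ((1:ℝ)/p) * ((n:ℝ)+1) ^ (-(1:ℝ)/p) * L ^ (-(1:ℝ)/p) := heq

theorem lemma18_first (p q : ℝ) (hp : 0 < p) (hq : 1 ≤ q) (hpq : p < q) :
    ∃ B : ℝ, ∀ t ∈ Set.Ioc (0:ℝ) 1, ∀ N : ℕ,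
      ∑ j ∈ Finset.Icc 1 N,
          (j : ℝ) ^ ((1 / q) - 1) * phi p (t ^ j / (Nat.factorial j : ℝ))
        ≤ B * phi p t := by
  set a : ℝ := (1/q - 1) + (-(1:ℝ)/p) with hadef
  have hq0 : (0:ℝ) < q := lt_of_lt_of_le one_pos hq
  have hra : a < -1 := by
    have h1 : 1/q < 1/p := one_div_lt_one_div_of_lt hp hpq
    have h2 : -(1:ℝ)/p = -(1/p) := by ring
    rw [hadef, h2]; linarith
  have hsum : Summable (fun j : ℕ => (j:ℝ) ^ a) := Real.summable_nat_rpow.mpr hra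
  refine ⟨2 ^ ((1:ℝ)/p) * ∑' j : ℕ, (j:ℝ) ^ a, ?_⟩
  rintro t ⟨ht0, ht1⟩ N
  have hphit : 0 ≤ phi p t := by
    rw [phi, if_neg ht0.ne']
    apply Real.rpow_nonneg
    apply div_nonneg (Real.log_nonneg (by nlinarith [one_div_pos.2 ht0])) (Real.log_nonneg one_le_two)
  calc ∑ j ∈ Finset.Icc 1 N, (j : ℝ) ^ ((1 / q) - 1) * phi p (t ^ j / (Nat.factorial j : ℝ))
      ≤ ∑ j ∈ Finset.Icc 1 N, 2 ^ ((1:ℝ)/p) * (j:ℝ) ^ a * phi p t := by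
        apply Finset.sum_le_sum
        intro j hj
        obtain ⟨hj1, _⟩ := Finset.mem_Icc.1 hj
        have hjpos : (0:ℝ) < (j:ℝ) := by exact_mod_cast hj1
        have h1 : (j : ℝ) ^ ((1 / q) - 1) * phi p (t ^ j / (Nat.factorial j : ℝ))
            ≤ (j : ℝ) ^ ((1 / q) - 1) * (2 ^ ((1:ℝ)/p) * (j:ℝ) ^ (-(1:ℝ)/p) * phi p t) :=
          mul_le_mul_of_nonneg_left (phi_key p hp t ht0 ht1 j hj1)
            (Real.rpow_nonneg hjpos.le _)
        refine h1.trans_eq ?_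
        rw [hadef, Real.rpow_add hjpos]
        ring
    _ = 2 ^ ((1:ℝ)/p) * (∑ j ∈ Finset.Icc 1 N, (j:ℝ) ^ a) * phi p t := by
        simp only [Finset.mul_sum, Finset.sum_mul, mul_assoc]
    _ ≤ 2 ^ ((1:ℝ)/p) * (∑' j : ℕ, (j:ℝ) ^ a) * phi p t := by
        apply mul_le_mul_of_nonneg_right _ hphit
        apply mul_le_mul_of_nonneg_left _ (by positivity)
        exact Summable.sum_le_tsum _ (fun i _ => Real.rpow_nonneg (Nat.cast_nonneg i) _) hsum
end

section
/- Let 1 ≤ q < ∞ and let φ : [0,1] → [0,1] be increasing with φ(0)=0. If there exists C > 0 such that φ(t) ≥ C·(log(1+1/t)/log 2)^{-1/q} for all t ∈ (0,1], then for every t ∈ (0,1], the series Σ_{j=2}^∞ j^{(1/q)-1}·φ(t^j/j!) diverges. -/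
lemma aux_harmonic (M : ℝ) : ∃ K : ℕ, 1 ≤ K ∧ M < ∑ k ∈ Finset.Ioc 1 K, (1 / ((k : ℝ) + 1)) := by
  have h := Real.tendsto_sum_range_one_div_nat_succ_atTop
  obtain ⟨n, hn, hn2⟩ := ((h.eventually_gt_atTop (M + 3/2)).and (Filter.eventually_ge_atTop 2)).exists
  refine ⟨n - 1, by omega, ?_⟩
  have hIoc : Finset.Ioc 1 (n-1) = Finset.Ico 2 n := by
    rw [← Finset.Icc_add_one_left_eq_Ioc, ← Finset.Ico_add_one_right_eq_Icc]
    congr 1; omega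
  have hsplit := Finset.sum_Ico_consecutive (fun i : ℕ => 1 / ((i : ℝ) + 1))
    (by omega : 0 ≤ 2) (by omega : 2 ≤ n)
  rw [hIoc]
  have h02 : ∑ i ∈ Finset.Ico (0:ℕ) 2, (1 / ((i : ℝ) + 1)) = 3/2 := by
    norm_num [Finset.sum_Ico_eq_sum_range, Finset.sum_range_succ]
  have heq : ∑ i ∈ Finset.range n, (1 / ((i : ℝ) + 1)) = ∑ i ∈ Finset.Ico (0:ℕ) n, (1 / ((i : ℝ) + 1)) := by
    rw [Finset.range_eq_Ico]
  rw [heq] at hn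
  linarith

lemma aux_blocks (a b : ℕ → ℝ) (ha : ∀ j, 2 ≤ j → 0 ≤ a j)
    (hb : ∀ k, 2 ≤ k → b k ≤ ∑ j ∈ Finset.Ioc (2^k) (2^(k+1)), a j) :
    ∀ K, 1 ≤ K → ∑ k ∈ Finset.Ioc 1 K, b k ≤ ∑ j ∈ Finset.Ioc 1 (2^(K+1)), a j := by
  intro K hK
  induction K, hK using Nat.le_induction with
  | base =>
    simp only [Finset.Ioc_self, Finset.sum_empty]
    exact Finset.sum_nonneg fun j hj => ha j (by
      simp only [Finset.mem_Ioc] at hj; omega)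
  | succ K hK ih =>
    have h1 : (1:ℕ) ≤ 2^(K+1) := Nat.one_le_two_pow
    have h2 : (2:ℕ)^(K+1) ≤ 2^(K+2) := Nat.pow_le_pow_right (by norm_num) (by omega)
    have hsplit := Finset.sum_Ioc_consecutive a h1 h2
    have hsplitb := Finset.sum_Ioc_consecutive b (by omega : 1 ≤ K) (by omega : K ≤ K+1)
    have hbK : ∑ k ∈ Finset.Ioc K (K+1), b k = b (K+1) := by
      rw [Nat.Ioc_succ_singleton, Finset.sum_singleton]
    rw [← hsplit, ← hsplitb, hbK]
    exact add_le_add ih (hb (K+1) (by omega))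

lemma aux_term (q : ℝ) (hq1 : 1 ≤ q) (φ : ℝ → ℝ) (C : ℝ) (hC : 0 < C)
    (hlower : ∀ s ∈ Set.Ioc (0:ℝ) 1,
      C * (Real.log (1 + 1 / s) / Real.log 2) ^ (-(1 : ℝ) / q) ≤ φ s)
    (t : ℝ) (ht : t ∈ Set.Ioc (0:ℝ) 1) :
    ∃ c2 : ℝ, 0 < c2 ∧ ∀ j : ℕ, 3 ≤ j →
      c2 / ((j:ℝ) * Real.log j) ≤ (j : ℝ) ^ ((1 / q) - 1) * φ (t ^ j / (Nat.factorial j : ℝ)) := by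
  have hq0 : 0 < q := lt_of_lt_of_le one_pos hq1
  set e : ℝ := -(1:ℝ)/q with he_def
  have he : e ≤ 0 := by
    rw [he_def]; exact div_nonpos_of_nonpos_of_nonneg (by norm_num) hq0.le
  have he1 : -1 ≤ e := by
    rw [he_def, neg_div]
    have : 1/q ≤ 1 := by rw [div_le_one hq0]; exact hq1
    linarith
  have Klog : (0:ℝ) < Real.log 2 := Real.log_pos one_lt_two
  set B : ℝ := -Real.log t with hB_def
  have hB : 0 ≤ B := by
    rw [hB_def]; simp only [neg_nonneg]; exact Real.log_nonpos ht.1.le ht.2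
  set K' : ℝ := (2 + B) / Real.log 2 with hK'_def
  have hK' : 0 < K' := div_pos (by linarith) Klog
  refine ⟨C * K' ^ e, mul_pos hC (Real.rpow_pos_of_pos hK' e), ?_⟩
  intro j hj
  have hj3 : (3:ℝ) ≤ (j:ℝ) := by exact_mod_cast hj
  have hj0 : (0:ℝ) < (j:ℝ) := by linarith
  have hlogj : 1 ≤ Real.log j := by
    have h3 : (1:ℝ) ≤ Real.log 3 := by
      rw [Real.le_log_iff_exp_le (by norm_num)]
      exact (Real.exp_one_lt_d9.le.trans (by norm_num))
    exact h3.trans (Real.log_le_log (by norm_num) hj3)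
  have hfac0 : (0:ℝ) < (Nat.factorial j : ℝ) := by
    exact_mod_cast Nat.factorial_pos j
  set x : ℝ := t ^ j / (Nat.factorial j : ℝ) with hx_def
  have hx0 : 0 < x := div_pos (pow_pos ht.1 j) hfac0
  have hx1 : x ≤ 1 := by
    rw [hx_def, div_le_one hfac0]
    calc t ^ j ≤ 1 := pow_le_one₀ ht.1.le ht.2
      _ ≤ (Nat.factorial j : ℝ) := by exact_mod_cast Nat.one_le_iff_ne_zero.mpr (Nat.factorial_pos j).ne'
  have hφ := hlower x ⟨hx0, hx1⟩
  have h2x : 1 + 1/x ≤ 2/x := by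
    rw [le_div_iff₀ hx0]
    have : 1/x * x = 1 := by field_simp
    nlinarith
  have hL0 : 0 < Real.log (1 + 1/x) := Real.log_pos (by
    have : 0 < 1/x := by positivity
    linarith)
  have hlogx : Real.log x = (j:ℝ) * Real.log t - Real.log (Nat.factorial j : ℝ) := by
    rw [hx_def, Real.log_div (pow_ne_zero j ht.1.ne') hfac0.ne', Real.log_pow]
  have hfactlog : Real.log (Nat.factorial j : ℝ) ≤ (j:ℝ) * Real.log j := by
    calc Real.log (Nat.factorial j : ℝ) ≤ Real.log ((j:ℝ)^j) := by
          apply Real.log_le_log hfac0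
          exact_mod_cast Nat.factorial_le_pow j
      _ = (j:ℝ) * Real.log j := Real.log_pow j j
  have hjlogj : (3:ℝ) ≤ (j:ℝ) * Real.log j := by nlinarith
  have hLK : Real.log (1 + 1/x) ≤ (2 + B) * ((j:ℝ) * Real.log j) := by
    have h1 : Real.log (1 + 1/x) ≤ Real.log (2/x) := Real.log_le_log (by positivity) h2x
    have h2 : Real.log (2/x) = Real.log 2 - Real.log x := Real.log_div two_ne_zero hx0.ne'
    have hlog2le : Real.log 2 ≤ 1 := by
      have := Real.log_two_lt_d9; linarith
    have hjB : (j:ℝ) * B ≤ B * ((j:ℝ) * Real.log j) := by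
      have := mul_nonneg (mul_nonneg hB hj0.le) (sub_nonneg.mpr hlogj)
      nlinarith
    rw [h2, hlogx] at h1
    have : (j:ℝ) * Real.log t = -((j:ℝ) * B) := by rw [hB_def]; ring
    nlinarith
  have hdiv : Real.log (1 + 1/x) / Real.log 2 ≤ K' * ((j:ℝ) * Real.log j) := by
    rw [hK'_def, div_mul_eq_mul_div]
    gcongr
  have hpos2 : 0 < Real.log (1 + 1/x) / Real.log 2 := div_pos hL0 Klog
  have hrpow : (K' * ((j:ℝ) * Real.log j)) ^ e ≤ (Real.log (1 + 1/x) / Real.log 2) ^ e :=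
    Real.rpow_le_rpow_of_nonpos hpos2 hdiv he
  have hKexp : (K' * ((j:ℝ) * Real.log j)) ^ e = K'^e * ((j:ℝ)^e * (Real.log j)^e) := by
    rw [Real.mul_rpow hK'.le (by positivity), Real.mul_rpow hj0.le (by positivity)]
  have hjpow : (j:ℝ) ^ ((1/q) - 1) * (j:ℝ) ^ e = ((j:ℝ))⁻¹ := by
    rw [← Real.rpow_add hj0, show (1/q - 1) + e = -1 by rw [he_def]; ring, Real.rpow_neg_one]
  have hlogpow : (Real.log j) ^ (-1:ℝ) ≤ (Real.log j) ^ e :=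
    Real.rpow_le_rpow_of_exponent_le hlogj he1
  have hjq0 : (0:ℝ) ≤ (j:ℝ) ^ ((1/q) - 1) := Real.rpow_nonneg hj0.le _
  calc C * K'^e / ((j:ℝ) * Real.log j)
      = (j:ℝ)^((1/q)-1) * (C * (K'^e * ((j:ℝ)^e * (Real.log j)^(-1:ℝ)))) := by
        rw [Real.rpow_neg_one, div_eq_mul_inv, mul_inv, ← hjpow]
        ring
    _ ≤ (j:ℝ)^((1/q)-1) * (C * (K'^e * ((j:ℝ)^e * (Real.log j)^e))) := by
        apply mul_le_mul_of_nonneg_left _ hjq0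
        apply mul_le_mul_of_nonneg_left _ hC.le
        apply mul_le_mul_of_nonneg_left _ (Real.rpow_pos_of_pos hK' e).le
        exact mul_le_mul_of_nonneg_left hlogpow (Real.rpow_nonneg hj0.le e)
    _ = (j:ℝ)^((1/q)-1) * (C * (K' * ((j:ℝ) * Real.log j))^e) := by rw [hKexp]
    _ ≤ (j:ℝ)^((1/q)-1) * (C * (Real.log (1 + 1/x) / Real.log 2)^e) := by
        apply mul_le_mul_of_nonneg_left _ hjq0
        exact mul_le_mul_of_nonneg_left hrpow hC.le
    _ ≤ (j:ℝ)^((1/q)-1) * φ x := mul_le_mul_of_nonneg_left hφ hjq0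

theorem lemma18_second (q : ℝ) (hq1 : 1 ≤ q) (φ : ℝ → ℝ)
    (hmono : MonotoneOn φ (Set.Icc (0:ℝ) 1)) (h0 : φ 0 = 0)
    (hrange : ∀ t ∈ Set.Icc (0:ℝ) 1, φ t ∈ Set.Icc (0:ℝ) 1)
    (C : ℝ) (hC : 0 < C)
    (hlower : ∀ t ∈ Set.Ioc (0:ℝ) 1,
      C * (Real.log (1 + 1 / t) / Real.log 2) ^ (-(1 : ℝ) / q) ≤ φ t) :
    ∀ t ∈ Set.Ioc (0:ℝ) 1, ∀ M : ℝ, ∃ N : ℕ,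
      M < ∑ j ∈ Finset.Icc 2 N,
            (j : ℝ) ^ ((1 / q) - 1) * φ (t ^ j / (Nat.factorial j : ℝ)) := by
  intro t ht M
  obtain ⟨c2, hc2, hterm⟩ := aux_term q hq1 φ C hC hlower t ht
  have Klog : (0:ℝ) < Real.log 2 := Real.log_pos one_lt_two
  set c3 : ℝ := c2 / (2 * Real.log 2) with hc3_def
  have hc3 : 0 < c3 := div_pos hc2 (by linarith)
  obtain ⟨K, hK1, hK⟩ := aux_harmonic (M / c3)
  set a : ℕ → ℝ := fun j => (j : ℝ) ^ ((1 / q) - 1) * φ (t ^ j / (Nat.factorial j : ℝ)) with ha_def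
  set b : ℕ → ℝ := fun k => c3 * (1 / ((k:ℝ) + 1)) with hb_def
  have ha : ∀ j, 2 ≤ j → 0 ≤ a j := by
    intro j _
    apply mul_nonneg (Real.rpow_nonneg (Nat.cast_nonneg j) _)
    have hfac0 : (0:ℝ) < (Nat.factorial j : ℝ) := by exact_mod_cast Nat.factorial_pos j
    have hx0 : 0 ≤ t ^ j / (Nat.factorial j : ℝ) := div_nonneg (pow_nonneg ht.1.le j) hfac0.le
    have hx1 : t ^ j / (Nat.factorial j : ℝ) ≤ 1 := by
      rw [div_le_one hfac0]
      calc t ^ j ≤ 1 := pow_le_one₀ ht.1.le ht.2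
        _ ≤ (Nat.factorial j : ℝ) := by
            exact_mod_cast Nat.one_le_iff_ne_zero.mpr (Nat.factorial_pos j).ne'
    exact (hrange _ ⟨hx0, hx1⟩).1
  have hb : ∀ k, 2 ≤ k → b k ≤ ∑ j ∈ Finset.Ioc (2^k) (2^(k+1)), a j := by
    intro k hk
    set m : ℝ := c2 / ((2:ℝ)^(k+1) * (((k:ℝ)+1) * Real.log 2)) with hm_def
    have hkpos : (0:ℝ) < (k:ℝ) + 1 := by positivity
    have hcard : (Finset.Ioc (2^k) (2^(k+1))).card = 2^k := by
      rw [Nat.card_Ioc, pow_succ]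
      omega
    have hmem : ∀ j ∈ Finset.Ioc (2^k) (2^(k+1)), m ≤ a j := by
      intro j hj
      rw [Finset.mem_Ioc] at hj
      have hj3 : 3 ≤ j := by
        have : 2^2 ≤ 2^k := Nat.pow_le_pow_right (by norm_num) hk
        omega
      have hj3' : (3:ℝ) ≤ (j:ℝ) := by exact_mod_cast hj3
      have hjle : (j:ℝ) ≤ (2:ℝ)^(k+1) := by exact_mod_cast hj.2
      have hlogj1 : 1 ≤ Real.log j := by
        have h3 : (1:ℝ) ≤ Real.log 3 := by
          rw [Real.le_log_iff_exp_le (by norm_num)]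
          exact (Real.exp_one_lt_d9.le.trans (by norm_num))
        exact h3.trans (Real.log_le_log (by norm_num) hj3')
      have hlogjle : Real.log j ≤ ((k:ℝ)+1) * Real.log 2 := by
        calc Real.log j ≤ Real.log ((2:ℝ)^(k+1)) := Real.log_le_log (by linarith) hjle
          _ = ((k:ℝ)+1) * Real.log 2 := by
              rw [Real.log_pow]; push_cast; ring
      have h1 : m ≤ c2 / ((j:ℝ) * Real.log j) := by
        rw [hm_def]
        apply div_le_div_of_nonneg_left hc2.le (by nlinarith)
        exact mul_le_mul hjle hlogjle (by linarith) (by positivity)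
      exact h1.trans (hterm j hj3)
    have hsum := Finset.card_nsmul_le_sum (Finset.Ioc (2^k) (2^(k+1))) a m hmem
    rw [hcard, nsmul_eq_mul] at hsum
    refine le_trans ?_ hsum
    rw [hb_def, hm_def, hc3_def]
    have h2k : (0:ℝ) < (2:ℝ)^k := by positivity
    have : ((2^k : ℕ) : ℝ) = (2:ℝ)^k := by push_cast; ring
    rw [this]
    apply le_of_eq
    rw [pow_succ]
    field_simp
  have hblocks := aux_blocks a b ha hb K hK1
  refine ⟨2^(K+1), ?_⟩
  have hIcc : Finset.Icc 2 (2^(K+1)) = Finset.Ioc 1 (2^(K+1)) := by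
    exact (Finset.Icc_add_one_left_eq_Ioc 1 _)
  rw [hIcc]
  have hsumb : ∑ k ∈ Finset.Ioc 1 K, b k = c3 * ∑ k ∈ Finset.Ioc 1 K, (1 / ((k:ℝ) + 1)) := by
    rw [hb_def, Finset.mul_sum]
  have hM : M < ∑ k ∈ Finset.Ioc 1 K, b k := by
    rw [hsumb]
    rw [div_lt_iff₀ hc3] at hK
    linarith [hK]
  calc M < ∑ k ∈ Finset.Ioc 1 K, b k := hM
    _ ≤ ∑ j ∈ Finset.Ioc 1 (2^(K+1)), a j := hblocks
end

section
/- Let x = (x_{ij}) be an n×n matrix and 1 ≤ m ≤ n. Let x*_1 ≥ x*_2 ≥ ... ≥ x*_{n²} be the decreasing rearrangement of the absolute values of all entries. Then there is an absolute constant c > 0 (independent of n, m, x) such that c^{-1}·(1/n)·Σ_{k=1}^{nm} x*_k ≤ (1/n!)·Σ_{π ∈ S_n} (sum of the m largest values among |x_{1,π(1)}|,...,|x_{n,π(n)}|) ≤ c·(1/n)·Σ_{k=1}^{nm} x*_k. -/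
open scoped Classical

/-- Sum of the `m` largest entries of a vector. -/
noncomputable def sumLargest {ι : Type*} [Fintype ι] (v : ι → ℝ) (m : ℕ) : ℝ :=
  sSup ((fun I : Finset ι => ∑ i ∈ I, v i) '' {I | I.card = m})

open Finset Equiv

lemma sum_le_sumLargest {ι : Type*} [Fintype ι] (v : ι → ℝ) {m : ℕ} {I : Finset ι}
    (h : I.card = m) : ∑ i ∈ I, v i ≤ sumLargest v m := by
  apply le_csSup (((Set.toFinite _).image _).bddAbove)
  exact ⟨I, h, rfl⟩

lemma sumLargest_attained {ι : Type*} [Fintype ι] (v : ι → ℝ) {m : ℕ}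
    (hm : m ≤ Fintype.card ι) : ∃ I : Finset ι, I.card = m ∧ sumLargest v m = ∑ i ∈ I, v i := by
  obtain ⟨I₀, -, hI₀⟩ := Finset.exists_subset_card_eq (show m ≤ (univ : Finset ι).card by simpa using hm)
  have hne : ((fun I : Finset ι => ∑ i ∈ I, v i) '' {I | I.card = m}).Nonempty :=
    ⟨_, ⟨I₀, hI₀, rfl⟩⟩
  obtain ⟨I, hI, hIs⟩ := hne.csSup_mem ((Set.toFinite _).image _)
  exact ⟨I, hI, hIs.symm⟩

/-- All fibers `{π : π i = j}` have the same cardinality. -/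
lemma card_fiber_eq {n : ℕ} (i j j' : Fin n) :
    ((univ : Finset (Perm (Fin n))).filter fun π => π i = j).card
      = ((univ : Finset (Perm (Fin n))).filter fun π => π i = j').card := by
  apply Finset.card_nbij' (fun π => Equiv.swap j j' * π) (fun π => Equiv.swap j j' * π)
  · intro π hπ
    simp only [mem_coe, mem_filter, mem_univ, true_and] at hπ ⊢
    rw [Equiv.Perm.mul_apply, hπ, Equiv.swap_apply_left]
  · intro π hπ
    simp only [mem_coe, mem_filter, mem_univ, true_and] at hπ ⊢
    rw [Equiv.Perm.mul_apply, hπ, Equiv.swap_apply_right]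
  · intro π _
    simp [← mul_assoc, Equiv.swap_mul_self]
  · intro π _
    simp [← mul_assoc, Equiv.swap_mul_self]

lemma card_fiber_mul {n : ℕ} (i j : Fin n) :
    ((univ : Finset (Perm (Fin n))).filter fun π => π i = j).card * n = n.factorial := by
  have h1 : (univ : Finset (Perm (Fin n))).card
      = ∑ j' : Fin n, ((univ : Finset (Perm (Fin n))).filter fun π => π i = j').card :=
    Finset.card_eq_sum_card_fiberwise (fun π _ => mem_univ (π i))
  rw [Finset.card_univ, Fintype.card_perm, Fintype.card_fin] at h1
  have h2 : ∀ j' : Fin n, ((univ : Finset (Perm (Fin n))).filter fun π => π i = j').card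
      = ((univ : Finset (Perm (Fin n))).filter fun π => π i = j).card :=
    fun j' => card_fiber_eq i j' j
  rw [Finset.sum_congr rfl (fun j' _ => h2 j'), Finset.sum_const, Finset.card_univ,
    Fintype.card_fin, smul_eq_mul] at h1
  rw [mul_comm]
  exact h1.symm

lemma card_fiber_eq_fact {n : ℕ} (hn : 1 ≤ n) (i j : Fin n) :
    ((univ : Finset (Perm (Fin n))).filter fun π => π i = j).card = (n - 1).factorial := by
  have h1 := card_fiber_mul i j
  have h2 : n * (n - 1).factorial = n.factorial := Nat.mul_factorial_pred (by omega)
  apply Nat.eq_of_mul_eq_mul_right (show 0 < n by omega)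
  rw [h1, ← h2, mul_comm]

lemma card_fiber2_eq {n : ℕ} {j : Fin n} (i i' : Fin n) {j₁ j₂ : Fin n}
    (h1 : j₁ ≠ j) (h2 : j₂ ≠ j) :
    ((univ : Finset (Perm (Fin n))).filter fun π => π i = j ∧ π i' = j₁).card
      = ((univ : Finset (Perm (Fin n))).filter fun π => π i = j ∧ π i' = j₂).card := by
  apply Finset.card_nbij' (fun π => Equiv.swap j₁ j₂ * π) (fun π => Equiv.swap j₁ j₂ * π)
  · intro π hπ
    simp only [mem_coe, mem_filter, mem_univ, true_and] at hπ ⊢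
    refine ⟨?_, ?_⟩
    · rw [Equiv.Perm.mul_apply, hπ.1, Equiv.swap_apply_of_ne_of_ne h1.symm h2.symm]
    · rw [Equiv.Perm.mul_apply, hπ.2, Equiv.swap_apply_left]
  · intro π hπ
    simp only [mem_coe, mem_filter, mem_univ, true_and] at hπ ⊢
    refine ⟨?_, ?_⟩
    · rw [Equiv.Perm.mul_apply, hπ.1, Equiv.swap_apply_of_ne_of_ne h1.symm h2.symm]
    · rw [Equiv.Perm.mul_apply, hπ.2, Equiv.swap_apply_right]
  · intro π _
    simp [← mul_assoc, Equiv.swap_mul_self]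
  · intro π _
    simp [← mul_assoc, Equiv.swap_mul_self]

lemma card_fiber2_le {n : ℕ} {i i' j j' : Fin n} (hii : i ≠ i') (hjj : j ≠ j') :
    ((univ : Finset (Perm (Fin n))).filter fun π => π i = j ∧ π i' = j').card
      ≤ (n - 2).factorial := by
  have hn2 : 2 ≤ n := by
    have h1 : (j : ℕ) < n := j.isLt
    have h2 : (j' : ℕ) < n := j'.isLt
    have h3 : (j : ℕ) ≠ (j' : ℕ) := fun h => hjj (Fin.ext h)
    omega
  -- partition the fiber {π i = j} according to the value of π i'
  have base : ((univ : Finset (Perm (Fin n))).filter fun π => π i = j).card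
      = ∑ b ∈ (univ : Finset (Fin n)).erase j,
          (((univ : Finset (Perm (Fin n))).filter fun π => π i = j).filter
            fun π => π i' = b).card := by
    apply Finset.card_eq_sum_card_fiberwise
    intro π hπ
    simp only [mem_coe, mem_filter, mem_univ, true_and] at hπ
    refine Finset.mem_erase.2 ⟨fun (hb : π i' = j) => hii ?_, mem_univ _⟩
    exact π.injective (by rw [hπ, hb])
  -- all these fibers have the same cardinality
  have heq : ∀ b ∈ (univ : Finset (Fin n)).erase j,
      (((univ : Finset (Perm (Fin n))).filter fun π => π i = j).filter fun π => π i' = b).card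
        = ((univ : Finset (Perm (Fin n))).filter fun π => π i = j ∧ π i' = j').card := by
    intro b hb
    rw [Finset.filter_filter]
    exact card_fiber2_eq i i' (Finset.mem_erase.1 hb).1 hjj.symm
  rw [Finset.sum_congr rfl heq, Finset.sum_const, Finset.card_erase_of_mem (mem_univ j),
    Finset.card_univ, Fintype.card_fin, smul_eq_mul] at base
  rw [card_fiber_eq_fact (by omega) i j] at base
  have hfac : (n - 1).factorial = (n - 1) * (n - 2).factorial := by
    have := Nat.mul_factorial_pred (n := n - 1) (by omega)
    rw [show n - 1 - 1 = n - 2 by omega] at this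
    omega
  have : ((univ : Finset (Perm (Fin n))).filter fun π => π i = j ∧ π i' = j').card
      = (n - 2).factorial := by
    apply Nat.eq_of_mul_eq_mul_left (show 0 < n - 1 by omega)
    rw [← base, hfac]
  omega

lemma N_le {n : ℕ} {p q : Fin n × Fin n} (hpq : p ≠ q) :
    ((univ : Finset (Perm (Fin n))).filter fun π => π p.1 = p.2 ∧ π q.1 = q.2).card
      ≤ (n - 2).factorial := by
  by_cases h1 : p.1 = q.1
  · have h2 : p.2 ≠ q.2 := fun h => hpq (Prod.ext h1 h)
    have : ((univ : Finset (Perm (Fin n))).filter fun π => π p.1 = p.2 ∧ π q.1 = q.2) = ∅ := by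
      apply Finset.filter_false_of_mem
      rintro π - ⟨ha, hb⟩
      exact h2 (by rw [← ha, h1, hb])
    simp [this]
  · by_cases h2 : p.2 = q.2
    · have : ((univ : Finset (Perm (Fin n))).filter fun π => π p.1 = p.2 ∧ π q.1 = q.2) = ∅ := by
        apply Finset.filter_false_of_mem
        rintro π - ⟨ha, hb⟩
        exact h1 (π.injective (by rw [ha, hb, h2]))
      simp [this]
    · exact card_fiber2_le h1 h2

/-- Averaging: some `m`-subset of `A` captures at least an `m / |A|` fraction of the sum. -/
lemma exists_top_subset {ι : Type*} (A : Finset ι) (w : ι → ℝ) {m : ℕ}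
    (hm : 1 ≤ m) (hmA : m ≤ A.card) :
    ∃ I, I ⊆ A ∧ I.card = m ∧ (m : ℝ) * ∑ i ∈ A, w i ≤ (A.card : ℝ) * ∑ i ∈ I, w i := by
  obtain ⟨I, hIP, hImax⟩ := Finset.exists_max_image (A.powersetCard m) (fun I => ∑ i ∈ I, w i)
    (Finset.powersetCard_nonempty.2 hmA)
  rw [Finset.mem_powersetCard] at hIP
  obtain ⟨hIA, hIcard⟩ := hIP
  refine ⟨I, hIA, hIcard, ?_⟩
  have key : ∀ j ∈ A \ I, (m : ℝ) * w j ≤ ∑ i ∈ I, w i := by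
    intro j hj
    rw [Finset.mem_sdiff] at hj
    have hwj : ∀ i ∈ I, w j ≤ w i := by
      intro i hi
      have hjI : j ∉ I.erase i := fun h => hj.2 (Finset.erase_subset _ _ h)
      have hI' : insert j (I.erase i) ∈ A.powersetCard m := by
        rw [Finset.mem_powersetCard]
        constructor
        · intro a ha
          rcases Finset.mem_insert.1 ha with rfl | ha'
          · exact hj.1
          · exact hIA (Finset.erase_subset _ _ ha')
        · rw [Finset.card_insert_of_notMem hjI, Finset.card_erase_of_mem hi, hIcard]
          omega
      have hle := hImax _ hI'
      rw [Finset.sum_insert hjI, Finset.sum_erase_eq_sub hi] at hle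
      linarith
    calc (m : ℝ) * w j = ∑ _i ∈ I, w j := by rw [Finset.sum_const, hIcard, nsmul_eq_mul]
    _ ≤ ∑ i ∈ I, w i := Finset.sum_le_sum hwj
  have hsplit : ∑ i ∈ A, w i = ∑ i ∈ I, w i + ∑ i ∈ A \ I, w i := by
    rw [add_comm, Finset.sum_sdiff hIA]
  have h2 : (m : ℝ) * ∑ j ∈ A \ I, w j ≤ ((A.card : ℝ) - m) * ∑ i ∈ I, w i := by
    rw [Finset.mul_sum]
    calc ∑ j ∈ A \ I, (m : ℝ) * w j ≤ ∑ _j ∈ A \ I, ∑ i ∈ I, w i := Finset.sum_le_sum key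
    _ = ((A \ I).card : ℝ) * ∑ i ∈ I, w i := by rw [Finset.sum_const, nsmul_eq_mul]
    _ = ((A.card : ℝ) - m) * ∑ i ∈ I, w i := by
        rw [Finset.card_sdiff_of_subset hIA, hIcard, Nat.cast_sub hmA]
  rw [hsplit, mul_add]
  have h3 : ((A.card : ℝ) - m) * ∑ i ∈ I, w i = (A.card : ℝ) * ∑ i ∈ I, w i
      - (m : ℝ) * ∑ i ∈ I, w i := by ring
  linarith [h2, h3.le]

set_option maxHeartbeats 2000000 in
theorem theorem27_Xm : ∃ c : ℝ, 0 < c ∧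
    ∀ (n m : ℕ), 1 ≤ m → m ≤ n → ∀ x : Fin n → Fin n → ℝ,
      (c⁻¹ * ((1 / (n : ℝ)) * sumLargest (fun p : Fin n × Fin n => |x p.1 p.2|) (n * m))
          ≤ (1 / (Nat.factorial n : ℝ)) *
              ∑ π : Equiv.Perm (Fin n), sumLargest (fun i => |x i (π i)|) m) ∧
      ((1 / (Nat.factorial n : ℝ)) *
            ∑ π : Equiv.Perm (Fin n), sumLargest (fun i => |x i (π i)|) m
          ≤ c * ((1 / (n : ℝ)) * sumLargest (fun p : Fin n × Fin n => |x p.1 p.2|) (n * m))) := by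
  refine ⟨12, by norm_num, ?_⟩
  intro n m hm hmn x
  have hn : 1 ≤ n := hm.trans hmn
  set v : Fin n × Fin n → ℝ := fun p => |x p.1 p.2| with hv
  have hv0 : ∀ p, 0 ≤ v p := fun p => abs_nonneg _
  have hcard : n * m ≤ Fintype.card (Fin n × Fin n) := by
    rw [Fintype.card_prod, Fintype.card_fin]
    exact Nat.mul_le_mul_left n hmn
  obtain ⟨T, hTcard, hTS⟩ := sumLargest_attained v hcard
  set S := sumLargest v (n * m) with hS
  have hnm1 : 1 ≤ n * m := Nat.one_le_iff_ne_zero.2 (by positivity)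
  -- T is a set of largest entries
  have htop : ∀ p ∈ T, ∀ q, q ∉ T → v q ≤ v p := by
    intro p hp q hq
    by_contra hlt
    push_neg at hlt
    have hqT : q ∉ T.erase p := fun h => hq (Finset.erase_subset _ _ h)
    have hT' : (insert q (T.erase p)).card = n * m := by
      rw [Finset.card_insert_of_notMem hqT, Finset.card_erase_of_mem hp, hTcard]
      omega
    have hle := sum_le_sumLargest v hT'
    rw [Finset.sum_insert hqT, Finset.sum_erase_eq_sub hp, ← hS, hTS] at hle
    linarith
  have hSnn : 0 ≤ S := by
    rw [hTS]; exact Finset.sum_nonneg fun p _ => hv0 p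
  have hsmall : ∀ q, q ∉ T → ((n * m : ℕ) : ℝ) * v q ≤ S := by
    intro q hq
    calc ((n * m : ℕ) : ℝ) * v q = ∑ _p ∈ T, v q := by
          rw [Finset.sum_const, hTcard, nsmul_eq_mul]
    _ ≤ ∑ p ∈ T, v p := Finset.sum_le_sum fun p hp => htop p hp q hq
    _ = S := hTS.symm
  have hmn' : m ≤ Fintype.card (Fin n) := by rw [Fintype.card_fin]; exact hmn
  -- X π : sum of m largest diagonal values
  have hX0 : ∀ π : Perm (Fin n), 0 ≤ sumLargest (fun i => |x i (π i)|) m := by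
    intro π
    obtain ⟨I, -, hIc⟩ := Finset.exists_subset_card_eq
      (show m ≤ (univ : Finset (Fin n)).card by simpa using hmn')
    exact le_trans (Finset.sum_nonneg fun i _ => abs_nonneg _)
      (sum_le_sumLargest (fun i => |x i (π i)|) hIc)
  -- hit quantities
  set hsum : Perm (Fin n) → ℝ := fun π => ∑ p ∈ T, if π p.1 = p.2 then v p else 0 with hhsum
  set hcnt : Perm (Fin n) → ℕ := fun π => (T.filter fun p => π p.1 = p.2).card with hhcnt
  have hs0 : ∀ π, 0 ≤ hsum π := by
    intro π
    apply Finset.sum_nonneg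
    intro p _
    split_ifs with h
    exacts [hv0 p, le_rfl]
  -- the hit set as a subset of Fin n
  set A : Perm (Fin n) → Finset (Fin n) :=
    fun π => (T.filter fun p => π p.1 = p.2).image Prod.fst with hA
  have hinj : ∀ π : Perm (Fin n), ∀ p ∈ T.filter fun p => π p.1 = p.2,
      ∀ q ∈ T.filter fun p => π p.1 = p.2, p.1 = q.1 → p = q := by
    intro π p hp q hq h
    rw [Finset.mem_filter] at hp hq
    exact Prod.ext h (by rw [← hp.2, ← hq.2, h])
  have hAcard : ∀ π, (A π).card = hcnt π := by
    intro π
    exact Finset.card_image_of_injOn fun p hp q hq h => hinj π p hp q hq h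
  have hAsum : ∀ π, ∑ i ∈ A π, |x i (π i)| = hsum π := by
    intro π
    simp only [hA]
    rw [Finset.sum_image (hinj π)]
    simp only [hhsum]
    rw [← Finset.sum_filter]
    apply Finset.sum_congr rfl
    intro p hp
    rw [Finset.mem_filter] at hp
    rw [hp.2]
  have hAmem : ∀ π : Perm (Fin n), ∀ i : Fin n, i ∈ A π ↔ (i, π i) ∈ T := by
    intro π i
    constructor
    · intro hi
      simp only [hA] at hi
      rw [Finset.mem_image] at hi
      obtain ⟨p, hp, hpi⟩ := hi
      rw [Finset.mem_filter] at hp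
      have : p = (i, π i) := by
        apply Prod.ext hpi
        rw [← hp.2, hpi]
      rw [← this]; exact hp.1
    · intro hi
      simp only [hA]
      rw [Finset.mem_image]
      exact ⟨(i, π i), Finset.mem_filter.2 ⟨hi, rfl⟩, rfl⟩
  -- pointwise lower bound
  have claimL : ∀ π : Perm (Fin n), hcnt π ≤ 6 * m →
      hsum π ≤ 6 * sumLargest (fun i => |x i (π i)|) m := by
    intro π hπ
    rcases le_or_gt (hcnt π) m with hcm | hcm
    · obtain ⟨B, hAB, hBc⟩ := Finset.exists_superset_card_eq
        (s := A π) (n := m) (by rw [hAcard]; exact hcm) hmn'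
      have h1 : hsum π ≤ ∑ i ∈ B, |x i (π i)| := by
        rw [← hAsum π]
        exact Finset.sum_le_sum_of_subset_of_nonneg hAB fun i _ _ => abs_nonneg _
      have h2 := sum_le_sumLargest (fun i => |x i (π i)|) hBc
      have h3 := hX0 π
      linarith
    · obtain ⟨I, hIA, hIc, hkey⟩ := exists_top_subset (A π) (fun i => |x i (π i)|) hm
        (by rw [hAcard]; omega)
      have h2 := sum_le_sumLargest (fun i => |x i (π i)|) hIc
      rw [hAsum, hAcard] at hkey
      have hcr : ((hcnt π : ℕ) : ℝ) ≤ 6 * m := by exact_mod_cast hπ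
      have hIpos : 0 ≤ ∑ i ∈ I, |x i (π i)| := Finset.sum_nonneg fun i _ => abs_nonneg _
      have hm1 : (1 : ℝ) ≤ m := by exact_mod_cast hm
      nlinarith [hkey, h2, hcr, hIpos, hm1, hX0 π,
        mul_le_mul_of_nonneg_left h2 (by positivity : (0:ℝ) ≤ 6 * m),
        mul_le_mul_of_nonneg_right hcr hIpos]
  -- pointwise upper bound
  have claimU : ∀ π : Perm (Fin n),
      (n : ℝ) * sumLargest (fun i => |x i (π i)|) m ≤ (n : ℝ) * hsum π + S := by
    intro π
    obtain ⟨B, hBc, hBeq⟩ := sumLargest_attained (fun i => |x i (π i)|) hmn'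
    have hsplit : ∑ i ∈ B, |x i (π i)|
        = ∑ i ∈ B.filter (fun i => (i, π i) ∈ T), |x i (π i)|
          + ∑ i ∈ B.filter (fun i => ¬(i, π i) ∈ T), |x i (π i)| :=
      (Finset.sum_filter_add_sum_filter_not B _ _).symm
    have h1 : ∑ i ∈ B.filter (fun i => (i, π i) ∈ T), |x i (π i)| ≤ hsum π := by
      rw [← hAsum π]
      apply Finset.sum_le_sum_of_subset_of_nonneg _ fun i _ _ => abs_nonneg _
      intro i hi
      exact (hAmem π i).2 (Finset.mem_filter.1 hi).2
    have h2 : (n : ℝ) * ∑ i ∈ B.filter (fun i => ¬(i, π i) ∈ T), |x i (π i)| ≤ S := by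
      have hterm : ∀ i ∈ B.filter (fun i => ¬(i, π i) ∈ T),
          ((n * m : ℕ) : ℝ) * |x i (π i)| ≤ S := by
        intro i hi
        exact hsmall _ (Finset.mem_filter.1 hi).2
      have hsum2 : ((n * m : ℕ) : ℝ) * ∑ i ∈ B.filter (fun i => ¬(i, π i) ∈ T), |x i (π i)|
          ≤ ((B.filter (fun i => ¬(i, π i) ∈ T)).card : ℝ) * S := by
        rw [Finset.mul_sum]
        calc ∑ i ∈ B.filter (fun i => ¬(i, π i) ∈ T), ((n * m : ℕ) : ℝ) * |x i (π i)|
            ≤ ∑ _i ∈ B.filter (fun i => ¬(i, π i) ∈ T), S := Finset.sum_le_sum hterm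
        _ = ((B.filter (fun i => ¬(i, π i) ∈ T)).card : ℝ) * S := by
              rw [Finset.sum_const, nsmul_eq_mul]
      have hcardle : ((B.filter (fun i => ¬(i, π i) ∈ T)).card : ℝ) ≤ (m : ℝ) := by
        have := (Finset.card_filter_le B (fun i => ¬(i, π i) ∈ T)).trans_eq hBc
        exact_mod_cast this
      have hm0 : (0 : ℝ) < m := by exact_mod_cast hm
      have hn0 : (0 : ℝ) < n := by exact_mod_cast hn
      have hcast : ((n * m : ℕ) : ℝ) = (n : ℝ) * m := by push_cast; ring
      have hsig0 : 0 ≤ ∑ i ∈ B.filter (fun i => ¬(i, π i) ∈ T), |x i (π i)| :=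
        Finset.sum_nonneg fun i _ => abs_nonneg _
      rw [hcast] at hsum2
      nlinarith [mul_le_mul_of_nonneg_right hcardle hSnn]
    have hn0 : (0 : ℝ) ≤ n := by positivity
    rw [hBeq, hsplit, mul_add]
    have := mul_le_mul_of_nonneg_left h1 hn0
    linarith
  -- expected hit sum
  set F : ℕ := (n - 1).factorial with hF
  have hnF : n * F = n.factorial := Nat.mul_factorial_pred (by omega)
  have hsum_hs : ∑ π : Perm (Fin n), hsum π = (F : ℝ) * S := by
    simp only [hhsum]
    rw [Finset.sum_comm]
    have hinner : ∀ p ∈ T, (∑ π : Perm (Fin n), if π p.1 = p.2 then v p else 0)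
        = (F : ℝ) * v p := by
      intro p _
      rw [← Finset.sum_filter, Finset.sum_const, card_fiber_eq_fact hn p.1 p.2, nsmul_eq_mul]
    rw [Finset.sum_congr rfl hinner, ← Finset.mul_sum, ← hTS]
  -- second moment bound
  have hND : ∀ p ∈ T, (((univ : Finset (Perm (Fin n))).filter
        fun π => π p.1 = p.2 ∧ π p.1 = p.2).card : ℝ) = (F : ℝ) := by
    intro p _
    have : ((univ : Finset (Perm (Fin n))).filter fun π => π p.1 = p.2 ∧ π p.1 = p.2)
        = ((univ : Finset (Perm (Fin n))).filter fun π => π p.1 = p.2) := by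
      apply Finset.filter_congr
      intro π _
      simp [and_self]
    rw [this, card_fiber_eq_fact hn p.1 p.2]
  have hfac2 : (n * m) * (n - 2).factorial ≤ 2 * m * F := by
    rcases n with _ | n'
    · omega
    rcases n' with _ | k
    · simpa [hF] using by omega
    · have h1 : F = (k + 1) * k.factorial := by
        rw [hF]
        simp [Nat.factorial_succ]
      have h2 : (k + 2) - 2 = k := by omega
      rw [h2, h1]
      have : (k + 2) * m * k.factorial ≤ 2 * m * ((k + 1) * k.factorial) := by
        have hk : (k + 2) * m ≤ 2 * m * (k + 1) := by nlinarith
        calc (k + 2) * m * k.factorial ≤ 2 * m * (k + 1) * k.factorial :=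
              Nat.mul_le_mul_right _ hk
        _ = 2 * m * ((k + 1) * k.factorial) := by ring
      calc (k + 2) * m * k.factorial = (k + 2) * m * k.factorial := rfl
      _ ≤ 2 * m * ((k + 1) * k.factorial) := this
  have hNsum : ∀ p ∈ T, (∑ q ∈ T, (((univ : Finset (Perm (Fin n))).filter
        fun π => π p.1 = p.2 ∧ π q.1 = q.2).card : ℝ)) ≤ 3 * (m : ℝ) * F := by
    intro p hp
    rw [← Finset.add_sum_erase T _ hp]
    have hbound : ∑ q ∈ T.erase p, (((univ : Finset (Perm (Fin n))).filter
        fun π => π p.1 = p.2 ∧ π q.1 = q.2).card : ℝ) ≤ (n * m : ℝ) * (n - 2).factorial := by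
      calc ∑ q ∈ T.erase p, (((univ : Finset (Perm (Fin n))).filter
            fun π => π p.1 = p.2 ∧ π q.1 = q.2).card : ℝ)
          ≤ ∑ _q ∈ T.erase p, ((n - 2).factorial : ℝ) := by
            apply Finset.sum_le_sum
            intro q hq
            have hpq : p ≠ q := fun h => (Finset.mem_erase.1 hq).1 h.symm
            exact_mod_cast N_le hpq
      _ = ((T.erase p).card : ℝ) * ((n - 2).factorial : ℝ) := by
            rw [Finset.sum_const, nsmul_eq_mul]
      _ ≤ (n * m : ℝ) * (n - 2).factorial := by
            apply mul_le_mul_of_nonneg_right _ (by positivity)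
            rw [Finset.card_erase_of_mem hp, hTcard]
            have h1 : ((n * m - 1 : ℕ) : ℝ) ≤ ((n * m : ℕ) : ℝ) := by
              exact_mod_cast Nat.sub_le _ _
            calc ((n * m - 1 : ℕ) : ℝ) ≤ ((n * m : ℕ) : ℝ) := h1
            _ = (n : ℝ) * m := by push_cast; ring
    rw [hND p hp]
    have h2m : (n * m : ℝ) * (n - 2).factorial ≤ 2 * (m : ℝ) * F := by
      have := hfac2
      have hc : ((n * m * (n - 2).factorial : ℕ) : ℝ) ≤ ((2 * m * F : ℕ) : ℝ) := by
        exact_mod_cast this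
      push_cast at hc
      linarith
    have hF1 : (1 : ℝ) ≤ (m : ℝ) := by exact_mod_cast hm
    have hFpos : (0 : ℝ) < F := by
      have := Nat.factorial_pos (n - 1)
      exact_mod_cast this
    nlinarith
  have hsum_D : ∑ π : Perm (Fin n), hsum π * (hcnt π : ℝ) ≤ 3 * (m : ℝ) * F * S := by
    have hexp : ∀ π : Perm (Fin n), hsum π * (hcnt π : ℝ)
        = ∑ p ∈ T, ∑ q ∈ T, if π p.1 = p.2 ∧ π q.1 = q.2 then v p else 0 := by
      intro π
      simp only [hhsum, hhcnt]
      have hcntr : ((T.filter fun p => π p.1 = p.2).card : ℝ)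
          = ∑ q ∈ T, if π q.1 = q.2 then (1 : ℝ) else 0 := by
        rw [← Finset.sum_filter, Finset.sum_const, nsmul_eq_mul, mul_one]
      rw [hcntr, Finset.sum_mul_sum]
      apply Finset.sum_congr rfl
      intro p _
      apply Finset.sum_congr rfl
      intro q _
      by_cases h1 : π p.1 = p.2 <;> by_cases h2 : π q.1 = q.2 <;> simp [h1, h2]
    calc ∑ π : Perm (Fin n), hsum π * (hcnt π : ℝ)
        = ∑ p ∈ T, ∑ q ∈ T, ∑ π : Perm (Fin n),
            if π p.1 = p.2 ∧ π q.1 = q.2 then v p else 0 := by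
          rw [Finset.sum_congr rfl fun π _ => hexp π, Finset.sum_comm]
          apply Finset.sum_congr rfl
          intro p _
          rw [Finset.sum_comm]
    _ = ∑ p ∈ T, ∑ q ∈ T, (((univ : Finset (Perm (Fin n))).filter
            fun π => π p.1 = p.2 ∧ π q.1 = q.2).card : ℝ) * v p := by
          apply Finset.sum_congr rfl
          intro p _
          apply Finset.sum_congr rfl
          intro q _
          rw [← Finset.sum_filter, Finset.sum_const, nsmul_eq_mul]
    _ ≤ ∑ p ∈ T, 3 * (m : ℝ) * F * v p := by
          apply Finset.sum_le_sum
          intro p hp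
          rw [← Finset.sum_mul]
          exact mul_le_mul_of_nonneg_right (hNsum p hp) (hv0 p)
    _ = 3 * (m : ℝ) * F * S := by rw [← Finset.mul_sum, ← hTS]
  -- the bad set
  set bad := (univ : Finset (Perm (Fin n))).filter (fun π => 6 * m < hcnt π) with hbad
  have hbadsum : (6 * (m : ℝ) + 1) * ∑ π ∈ bad, hsum π
      ≤ ∑ π : Perm (Fin n), hsum π * (hcnt π : ℝ) := by
    calc (6 * (m : ℝ) + 1) * ∑ π ∈ bad, hsum π
        = ∑ π ∈ bad, (6 * (m : ℝ) + 1) * hsum π := by rw [Finset.mul_sum]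
    _ ≤ ∑ π ∈ bad, hsum π * (hcnt π : ℝ) := by
        apply Finset.sum_le_sum
        intro π hπ
        have h1 : 6 * m < hcnt π := (Finset.mem_filter.1 hπ).2
        have h2 : (6 * (m : ℝ) + 1) ≤ (hcnt π : ℝ) := by
          have : 6 * m + 1 ≤ hcnt π := h1
          exact_mod_cast this
        calc (6 * (m : ℝ) + 1) * hsum π ≤ (hcnt π : ℝ) * hsum π :=
              mul_le_mul_of_nonneg_right h2 (hs0 π)
        _ = hsum π * (hcnt π : ℝ) := mul_comm _ _
    _ ≤ ∑ π : Perm (Fin n), hsum π * (hcnt π : ℝ) := by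
        apply Finset.sum_le_sum_of_subset_of_nonneg (Finset.filter_subset _ _)
        intro π _ _
        exact mul_nonneg (hs0 π) (Nat.cast_nonneg _)
  -- good part
  have hgood : (F : ℝ) * S - ∑ π ∈ bad, hsum π
      ≤ 6 * ∑ π : Perm (Fin n), sumLargest (fun i => |x i (π i)|) m := by
    have hsplit := Finset.sum_filter_add_sum_filter_not (univ : Finset (Perm (Fin n)))
      (fun π => 6 * m < hcnt π) hsum
    have hgood1 : ∑ π ∈ (univ : Finset (Perm (Fin n))).filter (fun π => ¬6 * m < hcnt π), hsum π
        ≤ ∑ π ∈ (univ : Finset (Perm (Fin n))).filter (fun π => ¬6 * m < hcnt π),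
            6 * sumLargest (fun i => |x i (π i)|) m := by
      apply Finset.sum_le_sum
      intro π hπ
      exact claimL π (Nat.not_lt.1 (Finset.mem_filter.1 hπ).2)
    have hgood2 : ∑ π ∈ (univ : Finset (Perm (Fin n))).filter (fun π => ¬6 * m < hcnt π),
          sumLargest (fun i => |x i (π i)|) m
        ≤ ∑ π : Perm (Fin n), sumLargest (fun i => |x i (π i)|) m := by
      apply Finset.sum_le_sum_of_subset_of_nonneg (Finset.filter_subset _ _)
      intro π _ _
      exact hX0 π
    rw [← hsum_hs, ← hsplit, hbad]
    rw [← Finset.mul_sum] at hgood1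
    linarith
  -- final assembly
  set SX := ∑ π : Perm (Fin n), sumLargest (fun i => |x i (π i)|) m with hSX
  clear_value SX
  clear_value bad
  clear_value A
  clear_value hsum
  clear_value hcnt
  clear_value S
  clear_value v
  have hm1 : (1 : ℝ) ≤ m := by exact_mod_cast hm
  have hFpos : (0 : ℝ) < F := by exact_mod_cast Nat.factorial_pos (n - 1)
  have hn0 : (0 : ℝ) < n := by exact_mod_cast hn
  have hBbound : ∑ π ∈ bad, hsum π ≤ (F : ℝ) * S / 2 := by
    have h1 : (6 * (m : ℝ) + 1) * ∑ π ∈ bad, hsum π ≤ 3 * (m : ℝ) * F * S :=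
      hbadsum.trans hsum_D
    have hFS : 0 ≤ (F : ℝ) * S := mul_nonneg hFpos.le hSnn
    nlinarith [Finset.sum_nonneg (fun π (_ : π ∈ bad) => hs0 π)]
  have key1 : (F : ℝ) * S ≤ 12 * SX := by
    linarith [hBbound, hgood]
  have key2 : SX ≤ 2 * (F : ℝ) * S := by
    have hsumU : (n : ℝ) * SX ≤ (n : ℝ) * ((F : ℝ) * S) + (n.factorial : ℝ) * S := by
      rw [hSX, Finset.mul_sum]
      calc ∑ π : Perm (Fin n), (n : ℝ) * sumLargest (fun i => |x i (π i)|) m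
          ≤ ∑ π : Perm (Fin n), ((n : ℝ) * hsum π + S) :=
            Finset.sum_le_sum fun π _ => claimU π
      _ = (n : ℝ) * ∑ π : Perm (Fin n), hsum π + (Fintype.card (Perm (Fin n)) : ℝ) * S := by
            rw [Finset.sum_add_distrib, ← Finset.mul_sum, Finset.sum_const, nsmul_eq_mul,
              Finset.card_univ]
      _ = (n : ℝ) * ((F : ℝ) * S) + (n.factorial : ℝ) * S := by
            rw [hsum_hs, Fintype.card_perm, Fintype.card_fin]
    have hfactr : (n.factorial : ℝ) = (n : ℝ) * F := by
      rw [← hnF]; push_cast; ring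
    rw [hfactr] at hsumU
    have hnn : (0:ℝ) < n := hn0
    nlinarith [hsumU, hnn, mul_pos hnn hFpos]
  have hfactr : (n.factorial : ℝ) = (n : ℝ) * F := by
    rw [← hnF]; push_cast; ring
  constructor
  · rw [hfactr]
    rw [show (12 : ℝ)⁻¹ * (1 / (n : ℝ) * S) = (F * S) / (12 * ((n : ℝ) * F)) by
      field_simp]
    rw [show (1 : ℝ) / ((n : ℝ) * F) * SX = SX * 12 / (12 * ((n : ℝ) * F)) by
      field_simp]
    apply div_le_div_of_nonneg_right ?_ (by positivity)
    · linarith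
  · rw [hfactr]
    rw [show (12 : ℝ) * (1 / (n : ℝ) * S) = ((n : ℝ) * F) * (12 * S) / ((n : ℝ) * ((n : ℝ) * F)) by
      field_simp]
    rw [show (1 : ℝ) / ((n : ℝ) * F) * SX = (n : ℝ) * SX / ((n : ℝ) * ((n : ℝ) * F)) by
      field_simp]
    apply div_le_div_of_nonneg_right ?_ (by positivity)
    · nlinarith
end

section
/- For any n×n×n array y = (y_{ijk}), there is an absolute constant c > 0 (independent of n and y) such that c^{-1}·(1/n²)·Σ_{k=1}^{n²} y*_k ≤ (1/(n!)²)·Σ_{π,σ ∈ S_n} max_{1≤i≤n} |y_{i,π(i),σ(i)}| ≤ c·(1/n²)·Σ_{k=1}^{n²} y*_k, where y*_1 ≥ y*_2 ≥ ... is the decreasing rearrangement of the absolute values of all n³ entries of y. -/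
set_option maxHeartbeats 1000000

open scoped Classical

open Finset

private lemma fiber_swap (n : ℕ) (i j j' : Fin n) :
    (univ.filter fun π : Equiv.Perm (Fin n) => π i = j).card =
    (univ.filter fun π : Equiv.Perm (Fin n) => π i = j').card := by
  apply Finset.card_bij (fun π _ => Equiv.swap j j' * π)
  · intro π hπ
    simp only [mem_filter, mem_univ, true_and] at hπ ⊢
    simp [hπ]
  · intro π₁ h₁ π₂ h₂ hh
    exact mul_left_cancel hh
  · intro π hπ
    simp only [mem_filter, mem_univ, true_and] at hπ
    refine ⟨Equiv.swap j j' * π, ?_, ?_⟩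
    · simp [mem_filter, hπ]
    · rw [← mul_assoc, Equiv.swap_mul_self, one_mul]

private lemma fiber_card (n : ℕ) (hn : 0 < n) (i j : Fin n) :
    (univ.filter fun π : Equiv.Perm (Fin n) => π i = j).card = (n-1).factorial := by
  have h1 : (univ : Finset (Equiv.Perm (Fin n))).card =
      ∑ j' : Fin n, (univ.filter fun π : Equiv.Perm (Fin n) => π i = j').card :=
    Finset.card_eq_sum_card_fiberwise (fun π _ => mem_univ (π i))
  have h2 : ∑ j' : Fin n, (univ.filter fun π : Equiv.Perm (Fin n) => π i = j').card
      = n * (univ.filter fun π : Equiv.Perm (Fin n) => π i = j).card := by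
    rw [Finset.sum_congr rfl (fun j' _ => fiber_swap n i j' j)]
    simp [Finset.card_univ, mul_comm]
  have h3 : (univ : Finset (Equiv.Perm (Fin n))).card = n.factorial := by
    simp [Finset.card_univ, Fintype.card_perm]
  have h4 : n.factorial = n * (n-1).factorial := by
    obtain ⟨m, rfl⟩ := Nat.exists_eq_add_of_lt hn
    simp [Nat.factorial_succ]
  exact Nat.eq_of_mul_eq_mul_left hn (by omega)

private lemma fiber2_card (n : ℕ) {i i' : Fin n} (hii : i ≠ i') (j j' : Fin n) :
    (univ.filter fun π : Equiv.Perm (Fin n) => π i = j ∧ π i' = j').card * (n-1)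
      ≤ (n-1).factorial := by
  have hn : 0 < n := i.pos
  by_cases hjj : j' = j
  · subst hjj
    have : (univ.filter fun π : Equiv.Perm (Fin n) => π i = j' ∧ π i' = j') = ∅ := by
      apply Finset.filter_eq_empty_iff.2
      rintro π - ⟨h1, h2⟩
      exact hii (π.injective (h1.trans h2.symm))
    simp [this]
  · -- all fibers over j'' ≠ j are equal
    have hswap : ∀ j₁ j₂ : Fin n, j₁ ≠ j → j₂ ≠ j →
        (univ.filter fun π : Equiv.Perm (Fin n) => π i = j ∧ π i' = j₁).card =
        (univ.filter fun π : Equiv.Perm (Fin n) => π i = j ∧ π i' = j₂).card := by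
      intro j₁ j₂ h₁ h₂
      apply Finset.card_bij (fun π _ => Equiv.swap j₁ j₂ * π)
      · intro π hπ
        simp only [mem_filter, mem_univ, true_and] at hπ ⊢
        constructor
        · simp [hπ.1, Equiv.swap_apply_of_ne_of_ne (Ne.symm h₁) (Ne.symm h₂)]
        · simp [hπ.2]
      · intro π₁ _ π₂ _ hh
        exact mul_left_cancel hh
      · intro π hπ
        simp only [mem_filter, mem_univ, true_and] at hπ
        refine ⟨Equiv.swap j₁ j₂ * π, ?_, by rw [← mul_assoc, Equiv.swap_mul_self, one_mul]⟩
        simp only [mem_filter, mem_univ, true_and, Equiv.Perm.mul_apply]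
        constructor
        · rw [hπ.1, Equiv.swap_apply_of_ne_of_ne (Ne.symm h₁) (Ne.symm h₂)]
        · rw [hπ.2, Equiv.swap_apply_right]
    have hfib : (univ.filter fun π : Equiv.Perm (Fin n) => π i = j).card =
        ∑ j'' : Fin n, (univ.filter fun π : Equiv.Perm (Fin n) => π i = j ∧ π i' = j'').card := by
      rw [Finset.card_eq_sum_card_fiberwise
        (f := fun π : Equiv.Perm (Fin n) => π i') (t := univ) (fun π _ => mem_univ _)]
      congr 1
      ext j''
      rw [Finset.filter_filter]
    have hzero : (univ.filter fun π : Equiv.Perm (Fin n) => π i = j ∧ π i' = j).card = 0 := by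
      rw [Finset.card_eq_zero]
      apply Finset.filter_eq_empty_iff.2
      rintro π - ⟨h1, h2⟩
      exact hii (π.injective (h1.trans h2.symm))
    have hsplit : ∑ j'' : Fin n,
        (univ.filter fun π : Equiv.Perm (Fin n) => π i = j ∧ π i' = j'').card
        = ∑ j'' ∈ univ.erase j,
            (univ.filter fun π : Equiv.Perm (Fin n) => π i = j ∧ π i' = j'').card := by
      rw [← Finset.sum_erase_add _ _ (mem_univ j), hzero, add_zero]
    have hconst : ∑ j'' ∈ univ.erase j,
        (univ.filter fun π : Equiv.Perm (Fin n) => π i = j ∧ π i' = j'').card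
        = (n-1) * (univ.filter fun π : Equiv.Perm (Fin n) => π i = j ∧ π i' = j').card := by
      rw [Finset.sum_congr rfl (fun j'' hj'' => hswap j'' j' (Finset.ne_of_mem_erase hj'') hjj)]
      rw [Finset.sum_const, Finset.card_erase_of_mem (mem_univ j)]
      simp [Finset.card_univ, mul_comm]
    rw [fiber_card n hn i j] at hfib
    rw [mul_comm]
    omega

private lemma sum_perm_apply {n : ℕ} (hn : 0 < n) (i : Fin n) (h : Fin n → ℝ) :
    ∑ π : Equiv.Perm (Fin n), h (π i) = ((n-1).factorial : ℝ) * ∑ j, h j := by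
  have step : ∀ π : Equiv.Perm (Fin n), h (π i) = ∑ j, if π i = j then h j else 0 := by
    intro π
    rw [Finset.sum_ite_eq]
    simp
  rw [Finset.sum_congr rfl (fun π _ => step π), Finset.sum_comm, Finset.mul_sum]
  refine Finset.sum_congr rfl (fun j _ => ?_)
  rw [← Finset.sum_filter, Finset.sum_const, nsmul_eq_mul, fiber_card n hn i j]

private lemma sumLargest_spec {ι : Type*} [Fintype ι] (v : ι → ℝ) (m : ℕ)
    (hm : m ≤ Fintype.card ι) :
    ∃ A : Finset ι, A.card = m ∧ (∑ i ∈ A, v i) = sumLargest v m ∧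
      (∀ I : Finset ι, I.card = m → ∑ i ∈ I, v i ≤ sumLargest v m) ∧
      ∀ q, q ∉ A → ∀ p ∈ A, v q ≤ v p := by
  classical
  set s : Set ℝ := (fun I : Finset ι => ∑ i ∈ I, v i) '' {I | I.card = m} with hs
  obtain ⟨A₀, -, hA₀⟩ := Finset.exists_subset_card_eq (s := (univ : Finset ι)) (n := m) (by simpa using hm)
  have hne : s.Nonempty := ⟨∑ i ∈ A₀, v i, ⟨A₀, hA₀, rfl⟩⟩
  have hfin : s.Finite := Set.toFinite s
  have hmem : sSup s ∈ s := Set.Nonempty.csSup_mem hne hfin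
  obtain ⟨A, hAcard', hAsum⟩ := hmem
  have hAcard : A.card = m := hAcard'
  have hAsum2 : ∑ i ∈ A, v i = sumLargest v m := by rw [sumLargest, ← hs]; exact hAsum
  have hle : ∀ I : Finset ι, I.card = m → ∑ i ∈ I, v i ≤ sumLargest v m := by
    intro I hI
    exact le_csSup hfin.bddAbove ⟨I, hI, rfl⟩
  refine ⟨A, hAcard, hAsum2, hle, ?_⟩
  intro q hq p hp
  by_contra hlt
  push_neg at hlt
  have hqe : q ∉ A.erase p := fun h => hq (Finset.mem_of_mem_erase h)
  have hcard' : (insert q (A.erase p)).card = m := by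
    have hm1 : 1 ≤ m := hAcard ▸ Finset.card_pos.2 ⟨p, hp⟩
    rw [Finset.card_insert_of_notMem hqe, Finset.card_erase_of_mem hp, hAcard]
    omega
  have hsum' : ∑ i ∈ insert q (A.erase p), v i = v q + (∑ i ∈ A, v i - v p) := by
    rw [Finset.sum_insert hqe]
    congr 1
    have := Finset.sum_erase_add A v hp
    linarith
  have h2 := hle _ hcard'
  rw [hsum'] at h2
  linarith [hAsum2]

private lemma abel_layer {Ω : Type*} [Fintype Ω] (β : ℝ) (hβ : 0 ≤ β) (r : ℕ) :
    ∀ (x : ℕ → ℝ) (U : ℕ → Finset Ω) (h : Ω → ℝ),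
      (∀ k, k < r → 0 ≤ x k) →
      (∀ k l, k ≤ l → l < r → x l ≤ x k) →
      (∀ k l, k ≤ l → l < r → U k ⊆ U l) →
      (∀ ω, 0 ≤ h ω) →
      (∀ k, k < r → ∀ ω ∈ U k, x k ≤ h ω) →
      (∀ k, k < r → β * (k+1) ≤ ((U k).card : ℝ)) →
      β * ∑ k ∈ Finset.range r, x k ≤ ∑ ω, h ω := by
  induction r with
  | zero =>
    intro x U h _ _ _ hh0 _ _
    simpa using Finset.sum_nonneg fun ω _ => hh0 ω
  | succ r ih =>
    intro x U h hx0 hxa hUm hh0 hxh hUc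
    have hxr0 : 0 ≤ x r := hx0 r (Nat.lt_succ_self r)
    have key := ih (fun k => x k - x r) U
      (fun ω => h ω - if ω ∈ U r then x r else 0)
      (fun k hk => sub_nonneg.2 (hxa k r (Nat.le_of_lt hk) (Nat.lt_succ_self r)))
      (fun k l hkl hl => sub_le_sub_right (hxa k l hkl (Nat.lt_succ_of_lt hl)) _)
      (fun k l hkl hl => hUm k l hkl (Nat.lt_succ_of_lt hl))
      (fun ω => by
        by_cases hω : ω ∈ U r
        · simp only [if_pos hω]
          exact sub_nonneg.2 (hxh r (Nat.lt_succ_self r) ω hω)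
        · simp only [if_neg hω, sub_zero]
          exact hh0 ω)
      (fun k hk ω hω => by
        have hωr : ω ∈ U r := hUm k r (Nat.le_of_lt hk) (Nat.lt_succ_self r) hω
        simp only [if_pos hωr]
        exact sub_le_sub_right (hxh k (Nat.lt_succ_of_lt hk) ω hω) _)
      (fun k hk => hUc k (Nat.lt_succ_of_lt hk))
    have hsum : ∑ ω, (h ω - if ω ∈ U r then x r else 0)
        = (∑ ω, h ω) - x r * ((U r).card : ℝ) := by
      rw [Finset.sum_sub_distrib]
      congr 1
      rw [Finset.sum_ite_mem, Finset.univ_inter, Finset.sum_const, nsmul_eq_mul, mul_comm]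
    have hid : ∑ k ∈ Finset.range r, (x k - x r)
        = (∑ k ∈ Finset.range r, x k) - r * x r := by
      rw [Finset.sum_sub_distrib, Finset.sum_const, Finset.card_range, nsmul_eq_mul]
    rw [hsum, hid] at key
    have hcard := hUc r (Nat.lt_succ_self r)
    have h5 : β * ((r:ℝ)+1) * x r ≤ ((U r).card : ℝ) * x r :=
      mul_le_mul_of_nonneg_right hcard hxr0
    rw [Finset.sum_range_succ]
    nlinarith [key, h5]

private lemma count_lower {n : ℕ} (hn : 2 ≤ n) (B : Finset (Fin n × Fin n × Fin n))
    (hB : B.card ≤ (n-1)^2) :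
    ((n-1).factorial : ℝ)^2 / 2 * B.card ≤
      ((univ.filter fun ω : Equiv.Perm (Fin n) × Equiv.Perm (Fin n) =>
        ∃ p ∈ B, ω.1 p.1 = p.2.1 ∧ ω.2 p.1 = p.2.2).card : ℝ) := by
  have hn0 : 0 < n := by omega
  have hcast : ((n:ℝ) - 1) = ((n - 1 : ℕ) : ℝ) := by
    have h1 : (1:ℕ) ≤ n := by omega
    push_cast [h1]
    ring
  set ind : (Fin n × Fin n × Fin n) → Equiv.Perm (Fin n) × Equiv.Perm (Fin n) → ℝ :=
    fun p ω => if ω.1 p.1 = p.2.1 ∧ ω.2 p.1 = p.2.2 then 1 else 0 with hind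
  set N : Equiv.Perm (Fin n) × Equiv.Perm (Fin n) → ℝ := fun ω => ∑ p ∈ B, ind p ω with hN
  -- Step A : pointwise Bonferroni
  have stepA : ∀ ω, N ω - N ω * (N ω - 1) / 2 ≤
      (if ∃ p ∈ B, ω.1 p.1 = p.2.1 ∧ ω.2 p.1 = p.2.2 then (1:ℝ) else 0) := by
    intro ω
    have hNc : N ω = ((B.filter fun p => ω.1 p.1 = p.2.1 ∧ ω.2 p.1 = p.2.2).card : ℝ) := by
      rw [hN]; simp [hind, Finset.sum_boole]
    by_cases hex : ∃ p ∈ B, ω.1 p.1 = p.2.1 ∧ ω.2 p.1 = p.2.2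
    · rw [if_pos hex, hNc]
      set c := (B.filter fun p => ω.1 p.1 = p.2.1 ∧ ω.2 p.1 = p.2.2).card with hc
      have h12 : (0:ℝ) ≤ ((c:ℝ) - 1) * ((c:ℝ) - 2) := by
        rcases Nat.lt_or_ge c 2 with h | h
        · interval_cases c <;> norm_num
        · have : (2:ℝ) ≤ (c:ℝ) := by exact_mod_cast h
          nlinarith
      nlinarith
    · rw [if_neg hex, hNc]
      have : (B.filter fun p => ω.1 p.1 = p.2.1 ∧ ω.2 p.1 = p.2.2) = ∅ := by
        apply Finset.filter_eq_empty_iff.2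
        intro p hp hsel
        exact hex ⟨p, hp, hsel⟩
      rw [this]
      norm_num
  -- Step B : first moment
  have prod_split : ∀ p : Fin n × Fin n × Fin n,
      ∑ ω : Equiv.Perm (Fin n) × Equiv.Perm (Fin n), ind p ω =
      ((univ.filter fun π : Equiv.Perm (Fin n) => π p.1 = p.2.1).card : ℝ) *
      ((univ.filter fun σ : Equiv.Perm (Fin n) => σ p.1 = p.2.2).card : ℝ) := by
    intro p
    rw [Fintype.sum_prod_type]
    have : ∀ (π σ : Equiv.Perm (Fin n)), ind p (π, σ) =
        (if π p.1 = p.2.1 then (1:ℝ) else 0) * (if σ p.1 = p.2.2 then (1:ℝ) else 0) := by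
      intro π σ
      rw [hind]
      by_cases h1 : π p.1 = p.2.1 <;> by_cases h2 : σ p.1 = p.2.2 <;>
        simp [h1, h2]
    simp_rw [this]
    rw [← Finset.sum_mul_sum]
    congr 1 <;> simp [Finset.sum_boole]
  have stepB : ∑ ω : Equiv.Perm (Fin n) × Equiv.Perm (Fin n), N ω
      = (B.card : ℝ) * ((n-1).factorial : ℝ)^2 := by
    rw [hN, Finset.sum_comm]
    have : ∀ p ∈ B, ∑ ω : Equiv.Perm (Fin n) × Equiv.Perm (Fin n), ind p ω
        = ((n-1).factorial : ℝ)^2 := by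
      intro p _
      rw [prod_split p, fiber_card n hn0 p.1 p.2.1, fiber_card n hn0 p.1 p.2.2, sq]
    rw [Finset.sum_congr rfl this, Finset.sum_const, nsmul_eq_mul]
  -- Step C : second moment
  have ind_mul_self : ∀ p ω, ind p ω * ind p ω = ind p ω := by
    intro p ω
    rw [hind]
    by_cases h : ω.1 p.1 = p.2.1 ∧ ω.2 p.1 = p.2.2 <;> simp [h]
  have hNsq : ∀ ω, N ω * (N ω - 1) = ∑ p ∈ B, ∑ q ∈ B.erase p, ind p ω * ind q ω := by
    intro ω
    have h1 : N ω * N ω = ∑ p ∈ B, ∑ q ∈ B, ind p ω * ind q ω := by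
      rw [hN, Finset.sum_mul_sum]
    have h2 : ∀ p ∈ B, ∑ q ∈ B, ind p ω * ind q ω
        = (∑ q ∈ B.erase p, ind p ω * ind q ω) + ind p ω := by
      intro p hp
      rw [← Finset.sum_erase_add B _ hp, ind_mul_self]
    rw [Finset.sum_congr rfl h2, Finset.sum_add_distrib] at h1
    have : N ω = ∑ p ∈ B, ind p ω := rfl
    nlinarith [h1]
  have pair_bound : ∀ p ∈ B, ∀ q ∈ B.erase p,
      (∑ ω : Equiv.Perm (Fin n) × Equiv.Perm (Fin n), ind p ω * ind q ω) * ((n:ℝ)-1)^2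
        ≤ ((n-1).factorial : ℝ)^2 := by
    intro p hp q hq
    have hpq : q ≠ p := Finset.ne_of_mem_erase hq
    have hsum : ∑ ω : Equiv.Perm (Fin n) × Equiv.Perm (Fin n), ind p ω * ind q ω =
        ((univ.filter fun π : Equiv.Perm (Fin n) => π p.1 = p.2.1 ∧ π q.1 = q.2.1).card : ℝ) *
        ((univ.filter fun σ : Equiv.Perm (Fin n) => σ p.1 = p.2.2 ∧ σ q.1 = q.2.2).card : ℝ) := by
      rw [Fintype.sum_prod_type]
      have : ∀ (π σ : Equiv.Perm (Fin n)), ind p (π, σ) * ind q (π, σ) =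
          (if π p.1 = p.2.1 ∧ π q.1 = q.2.1 then (1:ℝ) else 0) *
          (if σ p.1 = p.2.2 ∧ σ q.1 = q.2.2 then (1:ℝ) else 0) := by
        intro π σ
        rw [hind]
        by_cases h1 : π p.1 = p.2.1 <;> by_cases h2 : σ p.1 = p.2.2 <;>
          by_cases h3 : π q.1 = q.2.1 <;> by_cases h4 : σ q.1 = q.2.2 <;>
          simp [h1, h2, h3, h4]
      simp_rw [this]
      rw [← Finset.sum_mul_sum]
      congr 1 <;> simp [Finset.sum_boole]
    by_cases hfst : p.1 = q.1
    · -- the sum is zero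
      have hzero : ∀ ω : Equiv.Perm (Fin n) × Equiv.Perm (Fin n), ind p ω * ind q ω = 0 := by
        intro ω
        rw [hind]
        by_cases h1 : ω.1 p.1 = p.2.1 ∧ ω.2 p.1 = p.2.2
        · by_cases h2 : ω.1 q.1 = q.2.1 ∧ ω.2 q.1 = q.2.2
          · exfalso
            apply hpq
            have e1 : q.2.1 = p.2.1 := by rw [← h2.1, ← h1.1, hfst]
            have e2 : q.2.2 = p.2.2 := by rw [← h2.2, ← h1.2, hfst]
            have : q.2 = p.2 := Prod.ext e1 e2
            exact Prod.ext hfst.symm this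
          · simp [h2]
        · simp [h1]
      rw [Finset.sum_congr rfl (fun ω _ => hzero ω), Finset.sum_const]
      simp
    · rw [hsum]
      have b1 := fiber2_card n (fun h => hfst h) p.2.1 q.2.1
      have b2 := fiber2_card n (fun h => hfst h) p.2.2 q.2.2
      rw [hcast]
      set c1 := (univ.filter fun π : Equiv.Perm (Fin n) => π p.1 = p.2.1 ∧ π q.1 = q.2.1).card
      set c2 := (univ.filter fun σ : Equiv.Perm (Fin n) => σ p.1 = p.2.2 ∧ σ q.1 = q.2.2).card
      have : (c1 * (n-1)) * (c2 * (n-1)) ≤ (n-1).factorial * (n-1).factorial :=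
        Nat.mul_le_mul b1 b2
      have := (Nat.cast_le (α := ℝ)).2 this
      push_cast at this
      nlinarith [this]
  have stepC : (∑ ω : Equiv.Perm (Fin n) × Equiv.Perm (Fin n), N ω * (N ω - 1)) * ((n:ℝ)-1)^2
      ≤ (B.card : ℝ)^2 * ((n-1).factorial : ℝ)^2 := by
    have hswap : (∑ ω : Equiv.Perm (Fin n) × Equiv.Perm (Fin n),
          ∑ p ∈ B, ∑ q ∈ B.erase p, ind p ω * ind q ω)
        = ∑ p ∈ B, ∑ q ∈ B.erase p,
            ∑ ω : Equiv.Perm (Fin n) × Equiv.Perm (Fin n), ind p ω * ind q ω := by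
      rw [Finset.sum_comm]
      exact Finset.sum_congr rfl (fun p _ => Finset.sum_comm)
    rw [Finset.sum_congr rfl (fun ω _ => hNsq ω), hswap, Finset.sum_mul]
    have hdist : ∀ p ∈ B, (∑ q ∈ B.erase p,
          ∑ ω : Equiv.Perm (Fin n) × Equiv.Perm (Fin n), ind p ω * ind q ω) * ((n:ℝ)-1)^2
        = ∑ q ∈ B.erase p,
            (∑ ω : Equiv.Perm (Fin n) × Equiv.Perm (Fin n), ind p ω * ind q ω) * ((n:ℝ)-1)^2 :=
      fun p _ => Finset.sum_mul _ _ _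
    rw [Finset.sum_congr rfl hdist]
    have hK2 : (0:ℝ) ≤ ((n-1).factorial : ℝ)^2 := by positivity
    calc ∑ p ∈ B, ∑ q ∈ B.erase p,
          (∑ ω : Equiv.Perm (Fin n) × Equiv.Perm (Fin n), ind p ω * ind q ω) * ((n:ℝ)-1)^2
        ≤ ∑ p ∈ B, ∑ q ∈ B.erase p, ((n-1).factorial : ℝ)^2 :=
          Finset.sum_le_sum (fun p hp => Finset.sum_le_sum (fun q hq => pair_bound p hp q hq))
      _ ≤ ∑ p ∈ B, (B.card : ℝ) * ((n-1).factorial : ℝ)^2 := by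
          refine Finset.sum_le_sum (fun p hp => ?_)
          rw [Finset.sum_const, nsmul_eq_mul]
          have : ((B.erase p).card : ℝ) ≤ (B.card : ℝ) := by
            exact_mod_cast Finset.card_le_card (Finset.erase_subset _ _)
          exact mul_le_mul_of_nonneg_right this hK2
      _ = (B.card : ℝ)^2 * ((n-1).factorial : ℝ)^2 := by
          rw [Finset.sum_const, nsmul_eq_mul]
          ring
  -- combine
  set L := ((univ.filter fun ω : Equiv.Perm (Fin n) × Equiv.Perm (Fin n) =>
      ∃ p ∈ B, ω.1 p.1 = p.2.1 ∧ ω.2 p.1 = p.2.2).card : ℝ) with hL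
  have hLsum : L = ∑ ω : Equiv.Perm (Fin n) × Equiv.Perm (Fin n),
      (if ∃ p ∈ B, ω.1 p.1 = p.2.1 ∧ ω.2 p.1 = p.2.2 then (1:ℝ) else 0) := by
    rw [hL, Finset.sum_boole]
  have h1 : ∑ ω : Equiv.Perm (Fin n) × Equiv.Perm (Fin n), (N ω - N ω * (N ω - 1) / 2) ≤ L := by
    rw [hLsum]
    exact Finset.sum_le_sum (fun ω _ => stepA ω)
  rw [Finset.sum_sub_distrib, stepB] at h1
  set Q := ∑ ω : Equiv.Perm (Fin n) × Equiv.Perm (Fin n), N ω * (N ω - 1) with hQ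
  have hQsum : ∑ ω : Equiv.Perm (Fin n) × Equiv.Perm (Fin n), N ω * (N ω - 1) / 2 = Q / 2 := by
    rw [hQ, ← Finset.sum_div]
  rw [hQsum] at h1
  set r := (B.card : ℝ) with hr'
  set K := ((n-1).factorial : ℝ) with hK'
  set d := ((n:ℝ) - 1) with hd'
  have hr0 : 0 ≤ r := by rw [hr']; exact Nat.cast_nonneg _
  have hd1 : (1:ℝ) ≤ d := by
    rw [hd']
    have : (2:ℝ) ≤ (n:ℝ) := by exact_mod_cast hn
    linarith
  have hd2 : (0:ℝ) < d^2 := by nlinarith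
  have hrd : r ≤ d^2 := by
    rw [hcast]
    calc r ≤ (((n-1)^2 : ℕ) : ℝ) := by rw [hr']; exact_mod_cast hB
      _ = (((n-1:ℕ)) : ℝ)^2 := by push_cast; ring
  have hmul : (r * K^2 - Q / 2) * d^2 ≤ L * d^2 :=
    mul_le_mul_of_nonneg_right h1 (le_of_lt hd2)
  have m1 : (0:ℝ) ≤ (d^2 - r) * r * K^2 := by
    apply mul_nonneg
    apply mul_nonneg
    · linarith
    · exact hr0
    · positivity
  have m1' : (0:ℝ) ≤ r*K^2*d^2 - r^2*K^2 := by
    have hh : (d^2 - r)*r*K^2 = r*K^2*d^2 - r^2*K^2 := by ring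
    linarith [m1]
  have hmul' : r*K^2*d^2 - (Q*d^2)/2 ≤ L*d^2 := by
    have hh : (r*K^2 - Q/2)*d^2 = r*K^2*d^2 - (Q*d^2)/2 := by ring
    linarith [hmul]
  clear_value L Q r K d
  clear hLsum hQ hQsum hNsq stepA stepB prod_split ind_mul_self hind hN hB hcast hL hmul m1 pair_bound
  clear N ind
  have key : (K^2 / 2 * r) * d^2 ≤ L * d^2 := by
    nlinarith [hmul', stepC, m1']
  exact le_of_mul_le_mul_right key hd2

private lemma card_triple (n : ℕ) : n^2 ≤ Fintype.card (Fin n × Fin n × Fin n) := by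
  simp only [Fintype.card_prod, Fintype.card_fin]
  rcases Nat.eq_zero_or_pos n with h | h
  · subst h; simp
  · calc n^2 ≤ n^3 := Nat.pow_le_pow_right h (by norm_num)
      _ = n*(n*n) := by ring

private lemma upper_bound {n : ℕ} (hn : 0 < n) (y : Fin n → Fin n → Fin n → ℝ) :
    (∑ π : Equiv.Perm (Fin n), ∑ σ : Equiv.Perm (Fin n), ⨆ i : Fin n, |y i (π i) (σ i)|)
        * (n:ℝ)^2
      ≤ 2 * ((n.factorial : ℝ))^2 *
        sumLargest (fun p : Fin n × Fin n × Fin n => |y p.1 p.2.1 p.2.2|) (n^2) := by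
  have hne : Nonempty (Fin n) := ⟨⟨0, hn⟩⟩
  set f : Fin n × Fin n × Fin n → ℝ := fun p => |y p.1 p.2.1 p.2.2| with hf
  obtain ⟨A, hAcard, hAsum, hAle, hAmax⟩ := sumLargest_spec f (n^2) (card_triple n)
  set S := sumLargest f (n^2) with hS
  have hfnn : ∀ p, 0 ≤ f p := fun p => abs_nonneg _
  have hS0 : 0 ≤ S := hAsum ▸ Finset.sum_nonneg (fun p _ => hfnn p)
  have hn2 : (0:ℝ) < (n:ℝ)^2 := by positivity
  -- pointwise bound
  have hpt : ∀ π σ : Equiv.Perm (Fin n), (⨆ i : Fin n, |y i (π i) (σ i)|)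
      ≤ S / (n:ℝ)^2 + ∑ i : Fin n, (if (i, π i, σ i) ∈ A then f (i, π i, σ i) else 0) := by
    intro π σ
    apply ciSup_le
    intro i₀
    have hterm : |y i₀ (π i₀) (σ i₀)| = f (i₀, π i₀, σ i₀) := rfl
    by_cases hmem : (i₀, π i₀, σ i₀) ∈ A
    · have h1 : f (i₀, π i₀, σ i₀) ≤ ∑ i : Fin n,
          (if (i, π i, σ i) ∈ A then f (i, π i, σ i) else 0) := by
        have := Finset.single_le_sum
          (f := fun i : Fin n => if (i, π i, σ i) ∈ A then f (i, π i, σ i) else 0)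
          (fun i _ => by positivity) (Finset.mem_univ i₀)
        simpa [hmem] using this
      have h2 : 0 ≤ S / (n:ℝ)^2 := by positivity
      rw [hterm]; linarith
    · have h1 : f (i₀, π i₀, σ i₀) * (n:ℝ)^2 ≤ S := by
        have hb : ∀ p ∈ A, f (i₀, π i₀, σ i₀) ≤ f p := hAmax _ hmem
        have := Finset.card_nsmul_le_sum A f (f (i₀, π i₀, σ i₀)) (fun p hp => hb p hp)
        rw [hAcard, nsmul_eq_mul] at this
        rw [hAsum] at this
        push_cast at this
        calc f (i₀, π i₀, σ i₀) * (n:ℝ)^2 = (n:ℝ)^2 * f (i₀, π i₀, σ i₀) := by ring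
          _ ≤ S := this
      have h2 : 0 ≤ ∑ i : Fin n, (if (i, π i, σ i) ∈ A then f (i, π i, σ i) else 0) :=
        Finset.sum_nonneg (fun i _ => by positivity)
      have h3 : f (i₀, π i₀, σ i₀) ≤ S / (n:ℝ)^2 := by
        rw [le_div_iff₀ hn2]; exact h1
      rw [hterm]; linarith
  -- sum the indicator part
  set g : Fin n → Fin n → Fin n → ℝ :=
    fun i j k => if (i, j, k) ∈ A then f (i, j, k) else 0 with hg
  have hinner : ∀ i : Fin n,
      ∑ π : Equiv.Perm (Fin n), ∑ σ : Equiv.Perm (Fin n), g i (π i) (σ i)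
      = ((n-1).factorial : ℝ)^2 * ∑ j : Fin n, ∑ k : Fin n, g i j k := by
    intro i
    have h1 : ∀ π : Equiv.Perm (Fin n), ∑ σ : Equiv.Perm (Fin n), g i (π i) (σ i)
        = ((n-1).factorial : ℝ) * ∑ k, g i (π i) k := fun π =>
      sum_perm_apply hn i (fun k => g i (π i) k)
    rw [Finset.sum_congr rfl (fun π _ => h1 π), ← Finset.mul_sum,
      sum_perm_apply hn i (fun j => ∑ k, g i j k), sq]
    ring
  have hsum_ind : ∑ π : Equiv.Perm (Fin n), ∑ σ : Equiv.Perm (Fin n),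
      ∑ i : Fin n, (if (i, π i, σ i) ∈ A then f (i, π i, σ i) else 0)
      = ((n-1).factorial : ℝ)^2 * S := by
    have swap1 : ∑ π : Equiv.Perm (Fin n), ∑ σ : Equiv.Perm (Fin n),
        ∑ i : Fin n, g i (π i) (σ i)
        = ∑ i : Fin n, ∑ π : Equiv.Perm (Fin n), ∑ σ : Equiv.Perm (Fin n), g i (π i) (σ i) := by
      rw [Finset.sum_congr rfl (fun π (_ : π ∈ univ) => Finset.sum_comm
        (s := (univ : Finset (Equiv.Perm (Fin n)))) (t := (univ : Finset (Fin n)))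
        (f := fun σ i => g i (π i) (σ i)))]
      exact Finset.sum_comm
    rw [swap1, Finset.sum_congr rfl (fun i _ => hinner i), ← Finset.mul_sum]
    congr 1
    have htriple : ∑ i : Fin n, ∑ j : Fin n, ∑ k : Fin n, g i j k
        = ∑ p : Fin n × Fin n × Fin n, (if p ∈ A then f p else 0) := by
      rw [Fintype.sum_prod_type]
      exact Finset.sum_congr rfl (fun i _ => by rw [Fintype.sum_prod_type])
    rw [htriple, Finset.sum_ite_mem, Finset.univ_inter, hAsum]
  -- combine
  have hT : (∑ π : Equiv.Perm (Fin n), ∑ σ : Equiv.Perm (Fin n), ⨆ i : Fin n, |y i (π i) (σ i)|)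
      ≤ ((n.factorial : ℝ))^2 * (S / (n:ℝ)^2) + ((n-1).factorial : ℝ)^2 * S := by
    calc ∑ π : Equiv.Perm (Fin n), ∑ σ : Equiv.Perm (Fin n), ⨆ i : Fin n, |y i (π i) (σ i)|
        ≤ ∑ π : Equiv.Perm (Fin n), ∑ σ : Equiv.Perm (Fin n),
            (S / (n:ℝ)^2 + ∑ i : Fin n, (if (i, π i, σ i) ∈ A then f (i, π i, σ i) else 0)) :=
          Finset.sum_le_sum (fun π _ => Finset.sum_le_sum (fun σ _ => hpt π σ))
      _ = ((n.factorial : ℝ))^2 * (S / (n:ℝ)^2) + ((n-1).factorial : ℝ)^2 * S := by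
          rw [← hsum_ind]
          simp only [Finset.sum_add_distrib, Finset.sum_const, Finset.card_univ,
            Fintype.card_perm, Fintype.card_fin, nsmul_eq_mul]
          push_cast
          ring
  have hfact : (n.factorial : ℝ) = (n:ℝ) * ((n-1).factorial : ℝ) := by
    obtain ⟨m, rfl⟩ := Nat.exists_eq_add_of_lt hn
    simp only [Nat.add_sub_cancel, Nat.factorial_succ]
    push_cast
    ring
  have expand : ((n.factorial : ℝ))^2 = (n:ℝ)^2 * ((n-1).factorial : ℝ)^2 := by
    rw [hfact]; ring
  calc (∑ π : Equiv.Perm (Fin n), ∑ σ : Equiv.Perm (Fin n), ⨆ i : Fin n, |y i (π i) (σ i)|)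
        * (n:ℝ)^2
      ≤ (((n.factorial : ℝ))^2 * (S / (n:ℝ)^2) + ((n-1).factorial : ℝ)^2 * S) * (n:ℝ)^2 :=
        mul_le_mul_of_nonneg_right hT (le_of_lt hn2)
    _ = ((n.factorial : ℝ))^2 * S + (((n-1).factorial : ℝ)^2 * (n:ℝ)^2) * S := by
        field_simp
    _ = 2 * ((n.factorial : ℝ))^2 * S := by rw [expand]; ring

private lemma lower_bound {n : ℕ} (hn : 2 ≤ n) (y : Fin n → Fin n → Fin n → ℝ) :
    ((n.factorial : ℝ))^2 *
        sumLargest (fun p : Fin n × Fin n × Fin n => |y p.1 p.2.1 p.2.2|) (n^2)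
      ≤ 8 * (n:ℝ)^2 *
        ∑ π : Equiv.Perm (Fin n), ∑ σ : Equiv.Perm (Fin n), ⨆ i : Fin n, |y i (π i) (σ i)| := by
  have hn0 : 0 < n := by omega
  have hne : Nonempty (Fin n) := ⟨⟨0, hn0⟩⟩
  set f : Fin n × Fin n × Fin n → ℝ := fun p => |y p.1 p.2.1 p.2.2| with hf
  have hfnn : ∀ p, 0 ≤ f p := fun p => abs_nonneg _
  obtain ⟨A, hAcard, hAsum, hAle, hAmax⟩ := sumLargest_spec f (n^2) (card_triple n)
  set S := sumLargest f (n^2) with hS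
  -- enumeration of A sorted decreasingly
  have hAfin : Fintype.card (↥A) = n^2 := by rw [Fintype.card_coe, hAcard]
  set enum : Fin (n^2) ≃ ↥A := (Fintype.equivFinOfCardEq hAfin).symm with henum
  set g0 : Fin (n^2) → ℝ := fun l => f ((enum l : ↥A) : Fin n × Fin n × Fin n) with hg0
  set τ : Equiv.Perm (Fin (n^2)) := Tuple.sort (fun l => -(g0 l)) with hτ
  set e : Fin (n^2) → Fin n × Fin n × Fin n := fun l => ((enum (τ l) : ↥A) : _) with he
  have he_inj : Function.Injective e := by
    intro a b hab
    apply τ.injective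
    apply enum.injective
    exact Subtype.coe_injective hab
  have heA : ∀ l, e l ∈ A := fun l => (enum (τ l)).2
  have hanti : ∀ k l : Fin (n^2), k ≤ l → f (e l) ≤ f (e k) := by
    intro k l hkl
    have := Tuple.monotone_sort (fun l => -(g0 l)) hkl
    simp only [Function.comp_apply] at this
    have h2 : g0 (τ l) ≤ g0 (τ k) := by linarith
    exact h2
  -- x values
  set x : ℕ → ℝ := fun k => if hk : k < n^2 then f (e ⟨k, hk⟩) else 0 with hx
  have hx_nonneg : ∀ k, 0 ≤ x k := by
    intro k
    by_cases hk : k < n^2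
    · simp only [hx, dif_pos hk]; exact hfnn _
    · simp only [hx, dif_neg hk]; exact le_refl 0
  have hx_anti : ∀ k l, k ≤ l → l < n^2 → x l ≤ x k := by
    intro k l hkl hl
    have hk : k < n^2 := lt_of_le_of_lt hkl hl
    simp only [hx, dif_pos hl, dif_pos hk]
    exact hanti ⟨k, hk⟩ ⟨l, hl⟩ hkl
  -- the B sets and U sets
  set B : ℕ → Finset (Fin n × Fin n × Fin n) :=
    fun k => (univ.filter fun l : Fin (n^2) => (l : ℕ) ≤ k).image e with hB
  set U : ℕ → Finset (Equiv.Perm (Fin n) × Equiv.Perm (Fin n)) :=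
    fun k => univ.filter fun ω => ∃ p ∈ B k, ω.1 p.1 = p.2.1 ∧ ω.2 p.1 = p.2.2 with hU
  have hcardB : ∀ k, k < n^2 → (B k).card = k + 1 := by
    intro k hk
    rw [hB]
    rw [Finset.card_image_of_injective _ he_inj]
    rw [← Finset.card_range (k+1)]
    refine Finset.card_bij (fun (l : Fin (n^2)) (_ : l ∈ univ.filter fun l : Fin (n^2) => (l : ℕ) ≤ k) => (l : ℕ)) ?_ ?_ ?_
    · intro l hl
      simp only [mem_filter, mem_univ, true_and] at hl
      show (l:ℕ) ∈ Finset.range (k+1)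
      rw [Finset.mem_range]
      omega
    · intro l₁ _ l₂ _ h
      exact Fin.val_injective h
    · intro a ha
      rw [Finset.mem_range] at ha
      have ha' : a < n^2 := by omega
      refine ⟨⟨a, ha'⟩, ?_, rfl⟩
      simp only [mem_filter, mem_univ, true_and]
      omega
  set m' : ℕ := (n-1)^2 with hm'
  have hm'_le : m' ≤ n^2 := Nat.pow_le_pow_left (by omega) 2
  have hm'_pos : 0 < m' := by
    have : 1 ≤ n - 1 := by omega
    have := Nat.pow_le_pow_left this 2
    exact lt_of_lt_of_le (by norm_num) this
  set M : Equiv.Perm (Fin n) × Equiv.Perm (Fin n) → ℝ :=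
    fun ω => ⨆ i : Fin n, |y i (ω.1 i) (ω.2 i)| with hM
  have hbdd : ∀ ω : Equiv.Perm (Fin n) × Equiv.Perm (Fin n),
      BddAbove (Set.range fun i : Fin n => |y i (ω.1 i) (ω.2 i)|) :=
    fun ω => (Set.finite_range _).bddAbove
  have hM_nonneg : ∀ ω, 0 ≤ M ω := by
    intro ω
    refine le_trans (abs_nonneg (y ⟨0, hn0⟩ (ω.1 ⟨0, hn0⟩) (ω.2 ⟨0, hn0⟩))) ?_
    exact le_ciSup (hbdd ω) ⟨0, hn0⟩
  -- abel layer application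
  have habel := abel_layer (((n-1).factorial : ℝ)^2 / 2) (by positivity) m' x U M
    (fun k hk => hx_nonneg k)
    (fun k l hkl hl => hx_anti k l hkl (lt_of_lt_of_le hl hm'_le))
    (fun k l hkl hl => by
      simp only [hU]
      intro ω hω
      simp only [Finset.mem_filter, mem_univ, true_and] at hω ⊢
      obtain ⟨p, hp, hsel⟩ := hω
      refine ⟨p, ?_, hsel⟩
      simp only [hB] at hp ⊢
      rcases Finset.mem_image.1 hp with ⟨l', hl', rfl⟩
      simp only [mem_filter, mem_univ, true_and] at hl'
      exact Finset.mem_image.2 ⟨l', by simp only [mem_filter, mem_univ, true_and]; omega, rfl⟩)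
    hM_nonneg
    (fun k hk ω hω => by
      simp only [hU, Finset.mem_filter] at hω
      obtain ⟨-, p, hp, hsel1, hsel2⟩ := hω
      simp only [hB] at hp
      rcases Finset.mem_image.1 hp with ⟨l, hl, rfl⟩
      simp only [mem_filter, mem_univ, true_and] at hl
      have hkm : k < n^2 := lt_of_lt_of_le hk hm'_le
      have step1 : x k ≤ f (e l) := by
        simp only [hx, dif_pos hkm]
        exact hanti l ⟨k, hkm⟩ (by exact hl)
      have step2 : f (e l) ≤ M ω := by
        have : f (e l) = |y (e l).1 (ω.1 (e l).1) (ω.2 (e l).1)| := by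
          rw [hf]
          simp only
          rw [hsel1, hsel2]
        rw [this, hM]
        exact le_ciSup (hbdd ω) (e l).1
      linarith)
    (fun k hk => by
      have hkm : k < n^2 := lt_of_lt_of_le hk hm'_le
      have hcount := count_lower hn (B k) (by rw [hcardB k hkm]; omega)
      simp only [hU]
      rw [hcardB k hkm] at hcount
      calc ((n-1).factorial : ℝ)^2 / 2 * ((k:ℝ)+1)
          = ((n-1).factorial : ℝ)^2 / 2 * ((k+1 : ℕ) : ℝ) := by push_cast; ring
        _ ≤ _ := hcount)
  -- relate sums
  have hsum_eq : ∑ p ∈ A, f p = ∑ k ∈ Finset.range (n^2), x k := by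
    have h1 : ∑ p ∈ A, f p = ∑ l : Fin (n^2), f (e l) := by
      rw [he]
      have : ∑ l : Fin (n^2), f ((enum (τ l) : ↥A) : Fin n × Fin n × Fin n)
          = ∑ l : Fin (n^2), f ((enum l : ↥A) : Fin n × Fin n × Fin n) :=
        Equiv.sum_comp τ (fun l => f ((enum l : ↥A) : Fin n × Fin n × Fin n))
      rw [this]
      rw [Equiv.sum_comp enum (fun a : ↥A => f (a : Fin n × Fin n × Fin n))]
      exact (Finset.sum_coe_sort A f).symm
    rw [h1, ← Fin.sum_univ_eq_sum_range x]
    refine Finset.sum_congr rfl (fun l _ => ?_)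
    simp only [hx, dif_pos l.isLt, Fin.eta]
  have hsplit : ∑ k ∈ Finset.range (n^2), x k
      = (∑ k ∈ Finset.range m', x k) + ∑ k ∈ Finset.Ico m' (n^2), x k :=
    (Finset.sum_range_add_sum_Ico x hm'_le).symm
  have htail : ∑ k ∈ Finset.Ico m' (n^2), x k ≤ 3 * ∑ k ∈ Finset.range m', x k := by
    have hxt : ∀ k ∈ Finset.Ico m' (n^2), x k ≤ x (m'-1) := by
      intro k hk
      rw [Finset.mem_Ico] at hk
      exact hx_anti (m'-1) k (by omega) hk.2
    have h1 : ∑ k ∈ Finset.Ico m' (n^2), x k ≤ ((n^2 - m' : ℕ) : ℝ) * x (m'-1) := by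
      have := Finset.sum_le_card_nsmul _ _ _ hxt
      rwa [Nat.card_Ico, nsmul_eq_mul] at this
    have h2 : (m' : ℝ) * x (m'-1) ≤ ∑ k ∈ Finset.range m', x k := by
      have hb : ∀ k ∈ Finset.range m', x (m'-1) ≤ x k := by
        intro k hk
        rw [Finset.mem_range] at hk
        exact hx_anti k (m'-1) (by omega) (by omega)
      have := Finset.card_nsmul_le_sum _ _ _ hb
      rwa [Finset.card_range, nsmul_eq_mul] at this
    have h3 : (n:ℕ)^2 - m' ≤ 3 * m' := by
      have h4 : n^2 ≤ 4 * m' := by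
        rw [hm']
        obtain ⟨a, rfl⟩ : ∃ a, n = a + 2 := ⟨n - 2, by omega⟩
        have e1 : a + 2 - 1 = a + 1 := by omega
        rw [e1]
        nlinarith [sq_nonneg a, Nat.zero_le a]
      omega
    have h3' : ((n^2 - m' : ℕ) : ℝ) ≤ 3 * (m' : ℝ) := by
      calc ((n^2 - m' : ℕ) : ℝ) ≤ ((3 * m' : ℕ) : ℝ) := by exact_mod_cast h3
        _ = 3 * (m' : ℝ) := by push_cast; ring
    have hx0 : 0 ≤ x (m'-1) := hx_nonneg _
    calc ∑ k ∈ Finset.Ico m' (n^2), x k ≤ ((n^2 - m' : ℕ) : ℝ) * x (m'-1) := h1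
      _ ≤ 3 * (m' : ℝ) * x (m'-1) := mul_le_mul_of_nonneg_right h3' hx0
      _ = 3 * ((m' : ℝ) * x (m'-1)) := by ring
      _ ≤ 3 * ∑ k ∈ Finset.range m', x k := by linarith [h2]
  have hS4 : S ≤ 4 * ∑ k ∈ Finset.range m', x k := by
    rw [← hAsum, hsum_eq, hsplit]
    linarith [htail]
  -- final combination
  have hTsum : ∑ ω : Equiv.Perm (Fin n) × Equiv.Perm (Fin n), M ω
      = ∑ π : Equiv.Perm (Fin n), ∑ σ : Equiv.Perm (Fin n), ⨆ i : Fin n, |y i (π i) (σ i)| := by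
    rw [Fintype.sum_prod_type]
  have hfact : (n.factorial : ℝ) = (n:ℝ) * ((n-1).factorial : ℝ) := by
    obtain ⟨m, rfl⟩ := Nat.exists_eq_add_of_lt hn0
    simp only [Nat.add_sub_cancel, Nat.factorial_succ]
    push_cast
    ring
  have hrange_pos : 0 ≤ ∑ k ∈ Finset.range m', x k :=
    Finset.sum_nonneg (fun k _ => hx_nonneg k)
  rw [hTsum] at habel
  calc ((n.factorial : ℝ))^2 * S
      ≤ ((n.factorial : ℝ))^2 * (4 * ∑ k ∈ Finset.range m', x k) := by
        apply mul_le_mul_of_nonneg_left hS4 (by positivity)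
    _ = 8 * (n:ℝ)^2 * (((n-1).factorial : ℝ)^2 / 2 * ∑ k ∈ Finset.range m', x k) := by
        rw [hfact]; ring
    _ ≤ 8 * (n:ℝ)^2 * ∑ π : Equiv.Perm (Fin n), ∑ σ : Equiv.Perm (Fin n),
          ⨆ i : Fin n, |y i (π i) (σ i)| := by
        apply mul_le_mul_of_nonneg_left habel (by positivity)


private lemma algebra_final {a b S T : ℝ} (ha : 0 < a) (hb : 0 < b) (hS : 0 ≤ S)
    (hl : b * S ≤ 8 * a * T) (hu : T * a ≤ 2 * b * S) :
    (8:ℝ)⁻¹ * ((1/a) * S) ≤ (1/b) * T ∧ (1/b) * T ≤ 8 * ((1/a) * S) := by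
  constructor
  · rw [show (8:ℝ)⁻¹ * ((1/a)*S) = S / (8*a) by ring, show (1/b)*T = T/b by ring,
      div_le_div_iff₀ (by positivity) hb]
    nlinarith [hl]
  · rw [show (1/b)*T = T/b by ring, show (8:ℝ) * ((1/a)*S) = (8*S)/a by ring,
      div_le_div_iff₀ hb ha]
    have h6 : 0 ≤ b * S := mul_nonneg hb.le hS
    nlinarith [hu]

theorem kwapien_schutt : ∃ c : ℝ, 0 < c ∧
    ∀ (n : ℕ), 0 < n → ∀ y : Fin n → Fin n → Fin n → ℝ,
      (c⁻¹ * ((1 / (n : ℝ) ^ 2) *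
            sumLargest (fun p : Fin n × Fin n × Fin n => |y p.1 p.2.1 p.2.2|) (n ^ 2))
          ≤ (1 / (Nat.factorial n : ℝ) ^ 2) *
              ∑ π : Equiv.Perm (Fin n), ∑ σ : Equiv.Perm (Fin n),
                ⨆ i : Fin n, |y i (π i) (σ i)|) ∧
      ((1 / (Nat.factorial n : ℝ) ^ 2) *
            ∑ π : Equiv.Perm (Fin n), ∑ σ : Equiv.Perm (Fin n),
              ⨆ i : Fin n, |y i (π i) (σ i)|
          ≤ c * ((1 / (n : ℝ) ^ 2) *
              sumLargest (fun p : Fin n × Fin n × Fin n => |y p.1 p.2.1 p.2.2|) (n ^ 2))) := by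
  refine ⟨8, by norm_num, ?_⟩
  intro n hn y
  have hS0 : 0 ≤ sumLargest (fun p : Fin n × Fin n × Fin n => |y p.1 p.2.1 p.2.2|) (n ^ 2) := by
    obtain ⟨A, hAcard, hAsum, -, -⟩ :=
      sumLargest_spec (fun p : Fin n × Fin n × Fin n => |y p.1 p.2.1 p.2.2|) (n^2) (card_triple n)
    rw [← hAsum]
    exact Finset.sum_nonneg (fun p _ => abs_nonneg _)
  rcases Nat.lt_or_ge n 2 with h1 | h2
  · -- n = 1
    have hn1 : n = 1 := by omega
    subst hn1
    have habs : ∀ a b c : Fin 1, |y a b c| = |y 0 0 0| := by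
      intro a b c
      rw [Subsingleton.elim a (0 : Fin 1), Subsingleton.elim b (0 : Fin 1),
        Subsingleton.elim c (0 : Fin 1)]
    have hsup : ∀ π σ : Equiv.Perm (Fin 1),
        (⨆ i : Fin 1, |y i (π i) (σ i)|) = |y 0 0 0| := by
      intro π σ
      rw [ciSup_unique]
      exact habs _ _ _
    have hT1 : (∑ π : Equiv.Perm (Fin 1), ∑ σ : Equiv.Perm (Fin 1),
        ⨆ i : Fin 1, |y i (π i) (σ i)|) = |y 0 0 0| := by
      rw [Finset.sum_congr rfl (fun π _ => Finset.sum_congr rfl (fun σ _ => hsup π σ))]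
      simp [Finset.sum_const, Finset.card_univ, Fintype.card_perm]
    have hS1 : sumLargest (fun p : Fin 1 × Fin 1 × Fin 1 => |y p.1 p.2.1 p.2.2|) (1 ^ 2)
        = |y 0 0 0| := by
      obtain ⟨A, hAcard, hAsum, -, -⟩ :=
        sumLargest_spec (fun p : Fin 1 × Fin 1 × Fin 1 => |y p.1 p.2.1 p.2.2|) (1^2)
          (card_triple 1)
      obtain ⟨p, rfl⟩ := Finset.card_eq_one.1 (by rw [hAcard]; norm_num)
      rw [← hAsum, Finset.sum_singleton]
      exact habs _ _ _
    rw [hT1, hS1]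
    have h0 : (0:ℝ) ≤ |y 0 0 0| := abs_nonneg _
    norm_num [Nat.factorial]
    constructor <;> linarith
  · have hn0 : 0 < n := by omega
    have hu := upper_bound hn0 y
    have hl := lower_bound h2 y
    have ha : (0:ℝ) < (n:ℝ)^2 := by positivity
    have hb : (0:ℝ) < ((n.factorial : ℝ))^2 := by positivity
    exact algebra_final ha hb hS0 hl hu
end
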